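/- arXiv:2006.09467 — 5 statements merged into one kernel-verified Lean document; each statement's English description precedes it below -/
import Mathlib

section
/- Let D be a 0–1 dataset with M rows and let o : Fin M → columns and v : Fin M → columns be two injective indexings of columns (the two column blocks O and V). Suppose fr(D;{o i}) = 1 and fr(D;{v i}) = 1 for all i, and fr(D;{o i, o j}) = 0 and fr(D;{v i, v j}) = 0 for all i ≠ j. Then for every i ∈ Fin M there is a unique j ∈ Fin M such that some row t has D t (o i) = 1 and D t (v j) = 1, and the resulting map σ : Fin M → Fin M defined by σ(i) = j is a bijection. -/
/-- Given two "permutation matrix" column blocks `O` and `V`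
(each column has frequency 1, each pair of distinct columns of the same block
has frequency 0), for every `i` there is a unique `j` such that some row has a 1
in both column `o i` and column `v j`, and the resulting map `σ` is a bijection. -/
theorem permutation_from_two_blocks (M n : ℕ) (D : Fin M → Fin n → Bool)
    (o v : Fin M → Fin n) (ho : Function.Injective o) (hv : Function.Injective v)
    (ho1 : ∀ i : Fin M, Nat.card {t : Fin M // D t (o i) = true} = 1)
    (hv1 : ∀ i : Fin M, Nat.card {t : Fin M // D t (v i) = true} = 1)
    (ho2 : ∀ i j : Fin M, i ≠ j →
      Nat.card {t : Fin M // D t (o i) = true ∧ D t (o j) = true} = 0)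
    (hv2 : ∀ i j : Fin M, i ≠ j →
      Nat.card {t : Fin M // D t (v i) = true ∧ D t (v j) = true} = 0) :
    (∀ i : Fin M, ∃! j : Fin M, ∃ t : Fin M, D t (o i) = true ∧ D t (v j) = true) ∧
    (∀ σ : Fin M → Fin M,
      (∀ i : Fin M, ∃ t : Fin M, D t (o i) = true ∧ D t (v (σ i)) = true) →
      Function.Bijective σ) := by
  have hoU : ∀ i : Fin M, ∃! t : Fin M, D t (o i) = true := by
    intro i
    obtain ⟨⟨t, ht⟩, hu⟩ := Nat.card_eq_one_iff_exists.mp (ho1 i)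
    exact ⟨t, ht, fun y hy => congrArg Subtype.val (hu ⟨y, hy⟩)⟩
  have hvU : ∀ i : Fin M, ∃! t : Fin M, D t (v i) = true := by
    intro i
    obtain ⟨⟨t, ht⟩, hu⟩ := Nat.card_eq_one_iff_exists.mp (hv1 i)
    exact ⟨t, ht, fun y hy => congrArg Subtype.val (hu ⟨y, hy⟩)⟩
  choose r hr hr' using hoU
  choose s hs hs' using hvU
  have hrinj : Function.Injective r := by
    intro i j hij
    by_contra hne
    have h0 := ho2 i j hne
    rw [Nat.card_eq_zero] at h0
    rcases h0 with h0 | h0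
    · exact h0.false ⟨r i, hr i, hij ▸ hr j⟩
    · exact absurd (Finite.of_injective _ Subtype.val_injective) h0.not_finite
  have hsinj : Function.Injective s := by
    intro i j hij
    by_contra hne
    have h0 := hv2 i j hne
    rw [Nat.card_eq_zero] at h0
    rcases h0 with h0 | h0
    · exact h0.false ⟨s i, hs i, hij ▸ hs j⟩
    · exact absurd (Finite.of_injective _ Subtype.val_injective) h0.not_finite
  have hssurj : Function.Surjective s := Finite.surjective_of_injective hsinj
  constructor
  · intro i
    obtain ⟨j, hj⟩ := hssurj (r i)
    refine ⟨j, ⟨r i, hr i, hj ▸ hs j⟩, ?_⟩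
    intro j' ⟨t, h1, h2⟩
    have ht1 : t = r i := hr' i t h1
    have ht2 : t = s j' := hs' j' t h2
    exact hsinj (by rw [← ht2, ht1, ← hj])
  · intro σ hσ
    have hinj : Function.Injective σ := by
      intro i i' hσeq
      obtain ⟨t, h1, h2⟩ := hσ i
      obtain ⟨t', h1', h2'⟩ := hσ i'
      have : t = t' := by
        rw [hs' (σ i) t h2, hs' (σ i') t' h2', hσeq]
      apply hrinj
      rw [← hr' i t h1, this, hr' i' t' h1']
    exact Finite.injective_iff_bijective.mp hinj
end

section
/- Let D be a 0–1 dataset and let x, y, b be three distinct columns such that fr(D;{x}) = 1, fr(D;{y}) = 1, fr(D;{x,y}) = 0, fr(D;{b}) = 2, fr(D;{b,x}) = 1 and fr(D;{b,y}) = 1. Then for every row t, D t b = 1 if and only if D t x = 1 or D t y = 1; that is, column b is exactly the entrywise OR of columns x and y. -/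
/-- If `fr({x}) = fr({y}) = 1`, `fr({x,y}) = 0`, `fr({b}) = 2`,
`fr({b,x}) = fr({b,y}) = 1`, then column `b` is exactly the entrywise OR of
columns `x` and `y`. -/
theorem column_is_or (m n : ℕ) (D : Fin m → Fin n → Bool) (x y b : Fin n)
    (hxy : x ≠ y) (hxb : x ≠ b) (hyb : y ≠ b)
    (hx : Nat.card {t : Fin m // D t x = true} = 1)
    (hy : Nat.card {t : Fin m // D t y = true} = 1)
    (hxy0 : Nat.card {t : Fin m // D t x = true ∧ D t y = true} = 0)
    (hb : Nat.card {t : Fin m // D t b = true} = 2)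
    (hbx : Nat.card {t : Fin m // D t b = true ∧ D t x = true} = 1)
    (hby : Nat.card {t : Fin m // D t b = true ∧ D t y = true} = 1) :
    ∀ t : Fin m, D t b = true ↔ (D t x = true ∨ D t y = true) := by
  simp only [Nat.card_eq_fintype_card, Fintype.card_subtype] at hx hy hxy0 hb hbx hby
  obtain ⟨tx, htx⟩ := Finset.card_eq_one.mp hx
  obtain ⟨ty, hty⟩ := Finset.card_eq_one.mp hy
  obtain ⟨sx, hsx⟩ := Finset.card_eq_one.mp hbx
  obtain ⟨sy, hsy⟩ := Finset.card_eq_one.mp hby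
  have memx : ∀ t : Fin m, D t x = true ↔ t = tx := by
    intro t
    constructor
    · intro h
      have : t ∈ Finset.filter (fun t => D t x = true) Finset.univ := by simp [h]
      rw [htx] at this; simpa using this
    · rintro rfl
      have : t ∈ Finset.filter (fun t => D t x = true) Finset.univ := by
        rw [htx]; exact Finset.mem_singleton_self t
      simpa using this
  have memy : ∀ t : Fin m, D t y = true ↔ t = ty := by
    intro t
    constructor
    · intro h
      have : t ∈ Finset.filter (fun t => D t y = true) Finset.univ := by simp [h]
      rw [hty] at this; simpa using this
    · rintro rfl
      have : t ∈ Finset.filter (fun t => D t y = true) Finset.univ := by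
        rw [hty]; exact Finset.mem_singleton_self t
      simpa using this
  have hempty : ∀ t : Fin m, ¬ (D t x = true ∧ D t y = true) := by
    intro t h
    have : t ∈ Finset.filter (fun t => D t x = true ∧ D t y = true) Finset.univ := by simp [h.1, h.2]
    rw [Finset.card_eq_zero.mp hxy0] at this
    simp at this
  have hne : tx ≠ ty := by
    intro h
    exact hempty tx ⟨(memx tx).mpr rfl, (memy tx).mpr (by rw [h])⟩
  -- tx has b
  have hsxmem : sx ∈ Finset.filter (fun t => D t b = true ∧ D t x = true) Finset.univ :=
    hsx ▸ Finset.mem_singleton_self sx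
  have hsymem : sy ∈ Finset.filter (fun t => D t b = true ∧ D t y = true) Finset.univ :=
    hsy ▸ Finset.mem_singleton_self sy
  simp only [Finset.mem_filter, Finset.mem_univ, true_and] at hsxmem hsymem
  have hsxtx : sx = tx := (memx sx).mp hsxmem.2
  have hsyty : sy = ty := (memy sy).mp hsymem.2
  have htxb : D tx b = true := hsxtx ▸ hsxmem.1
  have htyb : D ty b = true := hsyty ▸ hsymem.1
  have hsub : ({tx, ty} : Finset (Fin m)) ⊆ Finset.filter (fun t => D t b = true) Finset.univ := by
    intro t ht
    rcases Finset.mem_insert.mp ht with rfl | ht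
    · simp [htxb]
    · rw [Finset.mem_singleton] at ht; subst ht; simp [htyb]
  have hcard2 : ({tx, ty} : Finset (Fin m)).card = 2 := Finset.card_pair hne
  have heq : ({tx, ty} : Finset (Fin m)) = Finset.filter (fun t => D t b = true) Finset.univ :=
    Finset.eq_of_subset_of_card_le hsub (by rw [hb, hcard2])
  intro t
  constructor
  · intro h
    have : t ∈ ({tx, ty} : Finset (Fin m)) := by rw [heq]; simp [h]
    rcases Finset.mem_insert.mp this with rfl | ht
    · exact Or.inl ((memx t).mpr rfl)
    · rw [Finset.mem_singleton] at ht; subst ht; exact Or.inr ((memy t).mpr rfl)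
  · rintro (h | h)
    · rw [(memx t).mp h]; exact htxb
    · rw [(memy t).mp h]; exact htyb
end

section
/- Let G be a simple graph on vertex set Fin M with M ≥ 3. Construct the following 0–1 constraint system with M rows and six column groups: O = (o_i)_{i ∈ Fin M}, V = (v_i)_{i ∈ Fin M}, B = (b_i)_{i ∈ Fin M}, C = (c_P) indexed by unordered pairs P = {j,k} of distinct vertices, and S = (s_{i,P}) and E = (e_{i,P}) each indexed by pairs (i,P) with i ∈ Fin M and P = {j,k} a non-edge of G. Impose the itemset frequency constraints (indices of b taken modulo M): fr({o_i}) = 1 and fr({o_i,o_j}) = 0 for i ≠ j; fr({v_i}) = 1 and fr({v_i,v_j}) = 0 for i ≠ j; fr({b_i}) = 2, fr({b_i,o_i}) = 1, fr({b_i,o_{i+1}}) = 1; for P = {j,k}: fr({c_P}) = 2, fr({c_P,v_j}) = 1, fr({c_P,v_k}) = 1; for each non-edge P and each i: fr({s_{i,P}}) = 1, fr({s_{i,P},b_i}) = 1, fr({s_{i,P},c_P}) = 0; and fr({e_{i,P}}) = M − 1, fr({s_{i,P},e_{i,P}}) = 0. Then for every 0–1 dataset D with M rows satisfying all these constraints,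 the map σ : Fin M → Fin M defined by σ(i) = the unique j such that some row contains a 1 in both column o_i and column v_j is a well-defined bijection, and for every i ∈ Fin M the vertices σ(i) and σ(i+1 mod M) are adjacent in G; that is, σ traces a Hamiltonian cycle of G. -/
/-- The columns of the Hamiltonian-cycle reduction constraint system for a graph
`G` on `Fin M`: groups `O`, `V`, `B` indexed by `Fin M`, group `C` indexed by
unordered pairs of distinct vertices, and groups `S`, `E` indexed by pairs
`(i, P)` with `i ∈ Fin M` and `P` a non-edge of `G`. -/
inductive Col (M : ℕ) (G : SimpleGraph (Fin M)) : Type where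
  | o : Fin M → Col M G
  | v : Fin M → Col M G
  | b : Fin M → Col M G
  | c : {P : Sym2 (Fin M) // ¬ P.IsDiag} → Col M G
  | s : Fin M → {P : Sym2 (Fin M) // ¬ P.IsDiag ∧ P ∉ G.edgeSet} → Col M G
  | e : Fin M → {P : Sym2 (Fin M) // ¬ P.IsDiag ∧ P ∉ G.edgeSet} → Col M G

/-- The frequency of the singleton itemset `{x}` in the dataset `D`:
the number of rows having a 1 in column `x`. -/
noncomputable def fr1 {M : ℕ} {α : Type*} (D : Fin M → α → Bool) (x : α) : ℕ :=
  Nat.card {t : Fin M // D t x = true}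

/-- The frequency of the two-element itemset `{x, y}` in the dataset `D`:
the number of rows having a 1 in both columns `x` and `y`. -/
noncomputable def fr2 {M : ℕ} {α : Type*} (D : Fin M → α → Bool) (x y : α) : ℕ :=
  Nat.card {t : Fin M // D t x = true ∧ D t y = true}

/-- A 0–1 dataset `D` with `M` rows satisfies the itemset frequency constraints of
the Hamiltonian-cycle reduction for `G` (indices of the `b` columns taken mod `M`). -/
def Satisfies (M : ℕ) [NeZero M] (G : SimpleGraph (Fin M)) (D : Fin M → Col M G → Bool) : Prop :=
  (∀ i, fr1 D (Col.o i) = 1) ∧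
  (∀ i j, i ≠ j → fr2 D (Col.o i) (Col.o j) = 0) ∧
  (∀ i, fr1 D (Col.v i) = 1) ∧
  (∀ i j, i ≠ j → fr2 D (Col.v i) (Col.v j) = 0) ∧
  (∀ i, fr1 D (Col.b i) = 2) ∧
  (∀ i, fr2 D (Col.b i) (Col.o i) = 1) ∧
  (∀ i, fr2 D (Col.b i) (Col.o (i + 1)) = 1) ∧
  (∀ P, fr1 D (Col.c P) = 2) ∧
  (∀ (P : {P : Sym2 (Fin M) // ¬ P.IsDiag}) (j : Fin M),
      j ∈ P.val → fr2 D (Col.c P) (Col.v j) = 1) ∧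
  (∀ i P, fr1 D (Col.s i P) = 1) ∧
  (∀ i P, fr2 D (Col.s i P) (Col.b i) = 1) ∧
  (∀ (i : Fin M) (P : {P : Sym2 (Fin M) // ¬ P.IsDiag ∧ P ∉ G.edgeSet}),
      fr2 D (Col.s i P) (Col.c ⟨P.val, P.prop.1⟩) = 0) ∧
  (∀ i P, fr1 D (Col.e i P) = M - 1) ∧
  (∀ i P, fr2 D (Col.s i P) (Col.e i P) = 0)

lemma fr1_one {M : ℕ} {α : Type*} {D : Fin M → α → Bool} {x : α}
    (h : fr1 D x = 1) : ∃! t, D t x = true := by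
  unfold fr1 at h
  rw [Nat.card_eq_one_iff_unique] at h
  obtain ⟨hs, ⟨t, ht⟩⟩ := h
  exact ⟨t, ht, fun t' ht' => congrArg Subtype.val (hs.allEq ⟨t', ht'⟩ ⟨t, ht⟩)⟩

lemma fr2_zero {M : ℕ} {α : Type*} {D : Fin M → α → Bool} {x y : α}
    (h : fr2 D x y = 0) {t : Fin M} (hx : D t x = true) (hy : D t y = true) : False := by
  unfold fr2 at h
  haveI : Nonempty {t : Fin M // D t x = true ∧ D t y = true} := ⟨⟨t, hx, hy⟩⟩
  have := Nat.card_pos (α := {t : Fin M // D t x = true ∧ D t y = true})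
  omega

lemma fr2_one {M : ℕ} {α : Type*} {D : Fin M → α → Bool} {x y : α}
    (h : fr2 D x y = 1) : ∃ t, D t x = true ∧ D t y = true := by
  unfold fr2 at h
  rw [Nat.card_eq_one_iff_unique] at h
  obtain ⟨_, ⟨t, ht⟩⟩ := h
  exact ⟨t, ht⟩

lemma fr1_two {M : ℕ} {α : Type*} {D : Fin M → α → Bool} {x : α}
    (h : fr1 D x = 2) {a b t : Fin M} (ha : D a x = true) (hb : D b x = true)
    (hab : a ≠ b) (ht : D t x = true) : t = a ∨ t = b := by
  unfold fr1 at h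
  have hS : Nat.card {t : Fin M // D t x = true} = Set.ncard {t : Fin M | D t x = true} := rfl
  rw [hS, Set.ncard_eq_two] at h
  obtain ⟨u, v, huv, hset⟩ := h
  have ha' : a ∈ ({u, v} : Set (Fin M)) := hset ▸ ha
  have hb' : b ∈ ({u, v} : Set (Fin M)) := hset ▸ hb
  have ht' : t ∈ ({u, v} : Set (Fin M)) := hset ▸ ht
  simp only [Set.mem_insert_iff, Set.mem_singleton_iff] at ha' hb' ht'
  rcases ha' with rfl | rfl <;> rcases hb' with rfl | rfl <;> tauto

/-- For every 0–1 dataset `D` with `M` rows satisfying all the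
constraints of the Hamiltonian-cycle reduction for `G`, the map `σ` defined by
`σ i = ` the unique `j` such that some row has a 1 in both column `o i` and
column `v j` is a well-defined bijection, and consecutive vertices `σ i`,
`σ (i+1)` are always adjacent in `G`; i.e. `σ` traces a Hamiltonian cycle of `G`. -/
theorem constraints_give_hamiltonian_cycle (M : ℕ) [NeZero M] (hM : 3 ≤ M)
    (G : SimpleGraph (Fin M)) (D : Fin M → Col M G → Bool)
    (hD : Satisfies M G D) :
    (∀ i : Fin M, ∃! j : Fin M,
      ∃ t : Fin M, D t (Col.o i) = true ∧ D t (Col.v j) = true) ∧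
    (∀ σ : Fin M → Fin M,
      (∀ i : Fin M, ∃ t : Fin M, D t (Col.o i) = true ∧ D t (Col.v (σ i)) = true) →
      Function.Bijective σ ∧ ∀ i : Fin M, G.Adj (σ i) (σ (i + 1))) := by
  obtain ⟨ho1, ho2, hv1, hv2, hb1, hbo, hbo', hc1, hcv, hs1, hsb, hsc, he1, hse⟩ := hD
  -- unique rows for o and v columns
  have huo : ∀ i, ∃! t, D t (Col.o i) = true := fun i => fr1_one (ho1 i)
  have huv : ∀ j, ∃! t, D t (Col.v j) = true := fun j => fr1_one (hv1 j)
  set ro : Fin M → Fin M := fun i => (huo i).choose with hro_def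
  have hro : ∀ i, D (ro i) (Col.o i) = true := fun i => (huo i).choose_spec.1
  have hro_uniq : ∀ i t, D t (Col.o i) = true → t = ro i := fun i t ht =>
    (huo i).choose_spec.2 t ht
  set rv : Fin M → Fin M := fun j => (huv j).choose with hrv_def
  have hrv : ∀ j, D (rv j) (Col.v j) = true := fun j => (huv j).choose_spec.1
  have hrv_uniq : ∀ j t, D t (Col.v j) = true → t = rv j := fun j t ht =>
    (huv j).choose_spec.2 t ht
  -- injectivity of ro and rv
  have hro_inj : Function.Injective ro := by
    intro i i' h
    by_contra hne
    exact fr2_zero (ho2 i i' hne) (hro i) (h ▸ hro i')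
  have hrv_inj : Function.Injective rv := by
    intro j j' h
    by_contra hne
    exact fr2_zero (hv2 j j' hne) (hrv j) (h ▸ hrv j')
  have hrv_surj : Function.Surjective rv :=
    (Finite.injective_iff_surjective).mp hrv_inj
  -- i ≠ i + 1 in Fin M
  have hne1 : ∀ i : Fin M, i ≠ i + 1 := by
    intro i h
    rw [Fin.ext_iff] at h
    simp only [Fin.add_def, Fin.val_one'] at h
    rw [Nat.mod_eq_of_lt (show 1 < M by omega)] at h
    have hi := i.isLt
    rcases Nat.lt_or_ge (i.val + 1) M with h' | h'
    · rw [Nat.mod_eq_of_lt h'] at h; omega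
    · have hiv : i.val = M - 1 := by omega
      rw [hiv, Nat.sub_add_cancel (by omega), Nat.mod_self] at h
      omega
  constructor
  · -- part 1
    intro i
    obtain ⟨j, hj⟩ := hrv_surj (ro i)
    refine ⟨j, ⟨ro i, hro i, hj ▸ hrv j⟩, ?_⟩
    intro j' ⟨t, hto, htv⟩
    have h1 : t = ro i := hro_uniq i t hto
    have h2 : t = rv j' := hrv_uniq j' t htv
    exact hrv_inj (by rw [← h2, h1, hj])
  · -- part 2
    intro σ hσ
    have hkey : ∀ i, rv (σ i) = ro i := by
      intro i
      obtain ⟨t, hto, htv⟩ := hσ i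
      rw [← hrv_uniq (σ i) t htv, hro_uniq i t hto]
    have hσ_inj : Function.Injective σ := by
      intro i i' h
      apply hro_inj
      rw [← hkey, ← hkey, h]
    refine ⟨Finite.injective_iff_bijective.mp hσ_inj, ?_⟩
    intro i
    by_contra hadj
    have hne : σ i ≠ σ (i + 1) := fun h => hne1 i (hσ_inj h)
    set P : Sym2 (Fin M) := s(σ i, σ (i + 1)) with hP
    have hdiag : ¬ P.IsDiag := by simpa [hP] using hne
    have hedge : P ∉ G.edgeSet := by
      rw [hP, SimpleGraph.mem_edgeSet]
      exact hadj
    set Pp : {P : Sym2 (Fin M) // ¬ P.IsDiag ∧ P ∉ G.edgeSet} := ⟨P, hdiag, hedge⟩ with hPp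
    set Pc : {P : Sym2 (Fin M) // ¬ P.IsDiag} := ⟨P, hdiag⟩ with hPc
    -- rows of b i are ro i and ro (i+1)
    have hbi : D (ro i) (Col.b i) = true := by
      obtain ⟨t, htb, hto⟩ := fr2_one (hbo i)
      rwa [hro_uniq i t hto] at htb
    have hbi' : D (ro (i + 1)) (Col.b i) = true := by
      obtain ⟨t, htb, hto⟩ := fr2_one (hbo' i)
      rwa [hro_uniq (i + 1) t hto] at htb
    have hrone : ro i ≠ ro (i + 1) := fun h => hne1 i (hro_inj h)
    -- rows of c P include ro i and ro (i+1)
    have hci : D (ro i) (Col.c Pc) = true := by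
      obtain ⟨t, htc, htv⟩ := fr2_one (hcv Pc (σ i) (by simp [hPc, hP]))
      rw [hrv_uniq (σ i) t htv, hkey] at htc
      exact htc
    have hci' : D (ro (i + 1)) (Col.c Pc) = true := by
      obtain ⟨t, htc, htv⟩ := fr2_one (hcv Pc (σ (i + 1)) (by simp [hPc, hP]))
      rw [hrv_uniq (σ (i + 1)) t htv, hkey] at htc
      exact htc
    -- the s row lies in b i's rows, hence in c P's rows: contradiction
    obtain ⟨ts, hts, htsb⟩ := fr2_one (hsb i Pp)
    have : ts = ro i ∨ ts = ro (i + 1) := fr1_two (hb1 i) hbi hbi' hrone htsb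
    have htsc : D ts (Col.c Pc) = true := by rcases this with rfl | rfl <;> assumption
    exact fr2_zero (hsc i Pp) hts htsc
end

section
/- Let G be a simple graph on vertex set Fin M with M ≥ 3, let N be its number of edges and L = M(M−1)/2 − N its number of non-edges, and consider the constraint system of the Hamiltonian-cycle reduction (column groups O, V, B, C, S, E with the itemset frequency constraints fr({o_i}) = 1, fr({o_i,o_j}) = 0 (i≠j), fr({v_i}) = 1, fr({v_i,v_j}) = 0 (i≠j), fr({b_i}) = 2, fr({b_i,o_i}) = fr({b_i,o_{i+1 mod M}}) = 1, fr({c_{\{j,k\}}}) = 2, fr({c_{\{j,k\}},v_j}) = fr({c_{\{j,k\}},v_k}) = 1, and for each non-edge P and each i: fr({s_{i,P}}) = 1, fr({s_{i,P},b_i}) = 1, fr({s_{i,P},c_P}) = 0, fr({e_{i,P}}) = M−1, fr({s_{i,P},e_{i,P}}) = 0). Fix a Hamiltonian cycle H of G. Then the number of 0–1 datasets with M rows that satisfy all the constraints and whose induced cyclic ordering σ (defined by σ(i) = the unique j such that some row contains a 1 in both o_i and v_j) traces the cycle H is exactly M! · 2M · 2^{(M−4)L}; in particular this number is the same for every Hamiltonian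 cycle of G. -/
set_option linter.unusedSectionVars false
set_option linter.unusedVariables false
set_option maxHeartbeats 1000000

section HC

variable {M : ℕ} [NeZero M]

open Fin.NatCast Fin.CommRing

lemma fin_cast_ne (hM : 3 ≤ M) {a b : ℕ} (ha : a < M) (hb : b < M) (hab : a ≠ b) :
    ((a:ℕ) : Fin M) ≠ ((b:ℕ) : Fin M) := by
  simp [Fin.ext_iff, Fin.val_cast_of_lt ha, Fin.val_cast_of_lt hb, hab]

lemma fin_one_ne_zero' (hM : 3 ≤ M) : (1 : Fin M) ≠ 0 := by
  simpa using fin_cast_ne hM (by omega : 1 < M) (by omega : 0 < M) (by omega)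

lemma fin_two_ne_zero' (hM : 3 ≤ M) : (2 : Fin M) ≠ 0 := by
  simpa using fin_cast_ne hM (by omega : 2 < M) (by omega : 0 < M) (by omega)

lemma fin_add_one_ne (hM : 3 ≤ M) (i : Fin M) : i + 1 ≠ i := by
  intro h
  exact fin_one_ne_zero' hM (by linear_combination h - i)

lemma fr1_eq {α : Type*} (D : Fin M → α → Bool) (x : α) :
    fr1 D x = Set.ncard {t | D t x = true} := (Nat.card_coe_set_eq _).symm

lemma fr2_eq {α : Type*} (D : Fin M → α → Bool) (x y : α) :
    fr2 D x y = Set.ncard {t | D t x = true ∧ D t y = true} :=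
  (Nat.card_coe_set_eq _).symm

variable {G : SimpleGraph (Fin M)} {H : SimpleGraph (Fin M)}

/-- The non-edges of `G`. -/
abbrev NE (G : SimpleGraph (Fin M)) := {P : Sym2 (Fin M) // ¬ P.IsDiag ∧ P ∉ G.edgeSet}

/-- The edge set traced by a cyclic ordering. -/
def ES (σ : Fin M → Fin M) : Set (Sym2 (Fin M)) :=
  {P : Sym2 (Fin M) | ∃ i : Fin M, P = Sym2.mk (σ i) (σ (i + 1))}

/-- Orderings tracing `H`. -/
abbrev TS (H : SimpleGraph (Fin M)) := {σ : Fin M ≃ Fin M // H.edgeSet = ES ⇑σ}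

def mkD (G : SimpleGraph (Fin M)) (ρ σ : Fin M ≃ Fin M) (ch : Fin M → NE G → Bool) :
    Fin M → Col M G → Bool := fun t c =>
  match c with
  | .o i => decide (t = ρ (σ i))
  | .v j => decide (t = ρ j)
  | .b i => decide (t = ρ (σ i) ∨ t = ρ (σ (i+1)))
  | .c P => decide (ρ.symm t ∈ P.val)
  | .s i P => decide (t = ρ (σ (i + (cond (ch i P) 1 0))))
  | .e i P => decide (¬ (t = ρ (σ (i + (cond (ch i P) 1 0)))))

def GoodCh (σ : Fin M ≃ Fin M) (ch : Fin M → NE G → Bool) : Prop :=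
  ∀ i P, σ (i + (cond (ch i P) 1 0)) ∉ P.val


lemma ncard_setOf_eq (a : Fin M) : {t : Fin M | t = a}.ncard = 1 := by
  simp [Set.setOf_eq_eq_singleton]

lemma ncard_and_eq {p : Fin M → Prop} {a : Fin M} (hpa : p a) :
    {t : Fin M | p t ∧ t = a}.ncard = 1 := by
  have : {t : Fin M | p t ∧ t = a} = {a} := by ext t; simp (config := {contextual := true}) [hpa]
  simp [this]

lemma ncard_eq_and {p : Fin M → Prop} {a : Fin M} (hpa : p a) :
    {t : Fin M | t = a ∧ p t}.ncard = 1 := by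
  simp only [and_comm]; exact ncard_and_eq hpa

lemma ncard_and_eq_zero {p : Fin M → Prop} {a : Fin M} (hpa : ¬ p a) :
    {t : Fin M | p t ∧ t = a}.ncard = 0 := by
  have : {t : Fin M | p t ∧ t = a} = ∅ := by
    ext t; simp only [Set.mem_setOf_eq, Set.mem_empty_iff_false, iff_false]
    rintro ⟨h, rfl⟩; exact hpa h
  simp [this]

lemma ncard_eq_and_zero {p : Fin M → Prop} {a : Fin M} (hpa : ¬ p a) :
    {t : Fin M | t = a ∧ p t}.ncard = 0 := by
  simp only [and_comm]; exact ncard_and_eq_zero hpa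

lemma ncard_or (a b : Fin M) (hab : a ≠ b) : {t : Fin M | t = a ∨ t = b}.ncard = 2 := by
  have : {t : Fin M | t = a ∨ t = b} = {a, b} := by ext t; simp [Set.mem_insert_iff]
  rw [this, Set.ncard_pair hab]

lemma ncard_ne (r : Fin M) : {t : Fin M | ¬ t = r}.ncard = M - 1 := by
  have : {t : Fin M | ¬ t = r} = Set.univ \ {r} := by ext t; simp
  rw [this, Set.ncard_diff (by simp) (Set.toFinite _)]
  simp [Set.ncard_univ]


lemma decide_eq_bool {p : Prop} [Decidable p] {b : Bool} (h : p ↔ b = true) : decide p = b := by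
  cases b <;> simp_all

lemma exists_unique_row {α : Type*} {D : Fin M → α → Bool} {x : α} (h : fr1 D x = 1) :
    ∃ t, D t x = true ∧ ∀ y, D y x = true → y = t := by
  rw [fr1, Nat.card_eq_one_iff_unique] at h
  obtain ⟨hs, ⟨t, ht⟩⟩ := h
  exact ⟨t, ht, fun y hy => congrArg Subtype.val (hs.elim ⟨y, hy⟩ ⟨t, ht⟩)⟩

lemma not_both {α : Type*} {D : Fin M → α → Bool} {x y : α} (h : fr2 D x y = 0) (t : Fin M) :
    ¬(D t x = true ∧ D t y = true) := by
  intro ht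
  rw [fr2, Nat.card_eq_zero] at h
  rcases h with h' | h'
  · exact h'.elim ⟨t, ht⟩
  · exact @not_finite _ h' (Subtype.finite)

lemma exists_both {α : Type*} {D : Fin M → α → Bool} {x y : α} (h : fr2 D x y = 1) :
    ∃ t, D t x = true ∧ D t y = true := by
  rw [fr2, Nat.card_eq_one_iff_unique] at h
  obtain ⟨-, ⟨t, ht⟩⟩ := h
  exact ⟨t, ht⟩

lemma rows_eq_pair {α : Type*} {D : Fin M → α → Bool} {x : α} {a b : Fin M}
    (h : fr1 D x = 2) (ha : D a x = true) (hb : D b x = true) (hab : a ≠ b) :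
    ∀ t, D t x = true ↔ (t = a ∨ t = b) := by
  have hsub : ({a, b} : Set (Fin M)) ⊆ {t | D t x = true} := by
    rintro t (rfl | rfl) <;> simpa
  have heq := Set.eq_of_subset_of_ncard_le hsub
    (by rw [← fr1_eq, h, Set.ncard_pair hab]) (Set.toFinite _)
  intro t
  constructor
  · intro ht
    have : t ∈ ({a, b} : Set (Fin M)) := heq ▸ ht
    simpa using this
  · rintro (rfl | rfl) <;> assumption

lemma rows_eq_compl {α : Type*} {D : Fin M → α → Bool} {x : α} {r : Fin M}
    (h : fr1 D x = M - 1) (hr : ∀ t, D t x = true → t ≠ r) :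
    ∀ t, D t x = true ↔ ¬ t = r := by
  have hsub : {t | D t x = true} ⊆ {t : Fin M | ¬ t = r} := fun t ht => hr t ht
  have heq := Set.eq_of_subset_of_ncard_le hsub
    (by rw [← fr1_eq, h, ncard_ne]) (Set.toFinite _)
  intro t
  constructor
  · intro ht; exact hr t ht
  · intro ht
    have : t ∈ {t | D t x = true} := heq.symm ▸ (ht : t ∈ {t : Fin M | ¬ t = r})
    exact this

lemma mkD_satisfies (hM : 3 ≤ M) (ρ σ : Fin M ≃ Fin M) (ch : Fin M → NE G → Bool)
    (hch : GoodCh σ ch) : Satisfies M G (mkD G ρ σ ch) := by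
  classical
  have hne : ∀ i : Fin M, σ i ≠ σ (i+1) := fun i h =>
    fin_add_one_ne hM i (σ.injective h.symm)
  have hrow : ∀ (i : Fin M) (P : NE G),
      ρ (σ (i + (cond (ch i P) 1 0))) = ρ (σ i) ∨
      ρ (σ (i + (cond (ch i P) 1 0))) = ρ (σ (i+1)) := by
    intro i P; cases h : ch i P <;> simp [h]
  refine ⟨?_, ?_, ?_, ?_, ?_, ?_, ?_, ?_, ?_, ?_, ?_, ?_, ?_, ?_⟩
  · intro i
    rw [fr1_eq]; simp only [mkD, decide_eq_true_eq]; exact ncard_setOf_eq _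
  · intro i j hij
    rw [fr2_eq]; simp only [mkD, decide_eq_true_eq]
    exact ncard_eq_and_zero (fun h => hij (σ.injective (ρ.injective h)))
  · intro i
    rw [fr1_eq]; simp only [mkD, decide_eq_true_eq]; exact ncard_setOf_eq _
  · intro i j hij
    rw [fr2_eq]; simp only [mkD, decide_eq_true_eq]
    exact ncard_eq_and_zero (fun h => hij (ρ.injective h))
  · intro i
    rw [fr1_eq]; simp only [mkD, decide_eq_true_eq]
    exact ncard_or _ _ (fun h => hne i (ρ.injective h))
  · intro i
    rw [fr2_eq]; simp only [mkD, decide_eq_true_eq]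
    exact ncard_and_eq (Or.inl rfl)
  · intro i
    rw [fr2_eq]; simp only [mkD, decide_eq_true_eq]
    exact ncard_and_eq (Or.inr rfl)
  · rintro ⟨P, hP⟩
    induction P using Sym2.ind with | _ j k =>
    rw [Sym2.mk_isDiag_iff] at hP
    rw [fr1_eq]; simp only [mkD, decide_eq_true_eq]
    have : {t : Fin M | ρ.symm t ∈ Sym2.mk j k} = {ρ j, ρ k} := by
      ext t; simp only [Sym2.mem_iff, Set.mem_setOf_eq, Set.mem_insert_iff,
        Set.mem_singleton_iff, Equiv.eq_symm_apply]
      constructor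
      · rintro (h | h) <;> [exact Or.inl (by rw [← h]; simp); exact Or.inr (by rw [← h]; simp)]
      · rintro (rfl | rfl) <;> simp
    rw [this, Set.ncard_pair (fun h => hP (ρ.injective h))]
  · rintro ⟨P, hP⟩ j hj
    rw [fr2_eq]; simp only [mkD, decide_eq_true_eq]
    exact ncard_and_eq (by simpa using hj)
  · intro i P
    rw [fr1_eq]; simp only [mkD, decide_eq_true_eq]; exact ncard_setOf_eq _
  · intro i P
    rw [fr2_eq]; simp only [mkD, decide_eq_true_eq]
    exact ncard_eq_and (hrow i P)
  · intro i P
    rw [fr2_eq]; simp only [mkD, decide_eq_true_eq]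
    refine ncard_eq_and_zero ?_
    simpa using hch i P
  · intro i P
    rw [fr1_eq]; simp only [mkD, decide_eq_true_eq]; exact ncard_ne _
  · intro i P
    rw [fr2_eq]; simp only [mkD, decide_eq_true_eq]
    exact ncard_eq_and_zero (by simp)

lemma mkD_traces (hM : 3 ≤ M) (ρ σ : Fin M ≃ Fin M) (ch : Fin M → NE G → Bool)
    (hσ : H.edgeSet = ES ⇑σ) :
    ∀ τ : Fin M → Fin M,
      (∀ i : Fin M, ∃ t : Fin M, mkD G ρ σ ch t (Col.o i) = true ∧
         mkD G ρ σ ch t (Col.v (τ i)) = true) →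
      H.edgeSet = ES τ := by
  intro τ hτ
  have : ∀ i, τ i = σ i := by
    intro i
    obtain ⟨t, h1, h2⟩ := hτ i
    simp only [mkD, decide_eq_true_eq] at h1 h2
    exact ρ.injective (h2 ▸ h1)
  have hτσ : τ = ⇑σ := funext this
  rw [hσ, hτσ]

/-- The parameterizing data. -/
abbrev Data (G H : SimpleGraph (Fin M)) :=
  Σ σ : TS H, (Fin M ≃ Fin M) × (∀ (i : Fin M) (P : NE G), {b : Bool // σ.1 (i + (cond b 1 0)) ∉ P.val})

noncomputable def dataToD (x : Data G H) : Fin M → Col M G → Bool :=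
  mkD G x.2.1 x.1.1 (fun i P => (x.2.2 i P).1)

lemma bool_cond_inj (hM : 3 ≤ M) {b b' : Bool}
    (h : (cond b 1 0 : Fin M) = cond b' 1 0) : b = b' := by
  cases b <;> cases b' <;> simp only [cond] at h
  · rfl
  · exact absurd h.symm (fin_one_ne_zero' hM)
  · exact absurd h (fin_one_ne_zero' hM)
  · rfl

lemma dataToD_injective (hM : 3 ≤ M) : Function.Injective (dataToD (G := G) (H := H)) := by
  rintro ⟨⟨σ, hσ⟩, ρ, ch⟩ ⟨⟨σ', hσ'⟩, ρ', ch'⟩ h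
  have happ : ∀ t c, mkD G ρ σ (fun i P => (ch i P).1) t c
      = mkD G ρ' σ' (fun i P => (ch' i P).1) t c := fun t c => congrFun (congrFun h t) c
  have hρ : ρ = ρ' := by
    ext j
    have := happ (ρ j) (Col.v j)
    simp only [mkD, decide_eq_decide] at this
    exact congrArg Fin.val (this.mp trivial)
  subst hρ
  have hσσ : σ = σ' := by
    ext i
    have := happ (ρ (σ i)) (Col.o i)
    simp only [mkD, decide_eq_decide] at this
    exact congrArg Fin.val (ρ.injective (this.mp trivial))
  subst hσσ
  have hch : ch = ch' := by
    funext i P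
    have := happ (ρ (σ (i + cond (ch i P).1 1 0))) (Col.s i P)
    simp only [mkD, decide_eq_decide] at this
    have h3 := σ.injective (ρ.injective (this.mp trivial))
    exact Subtype.ext (bool_cond_inj hM (add_left_cancel h3))
  subst hch
  rfl

lemma dataToD_surjective (hM : 3 ≤ M) (hHG : H ≤ G)
    (D : Fin M → Col M G → Bool) (hD : Satisfies M G D)
    (hDtr : ∀ σ : Fin M → Fin M,
      (∀ i : Fin M, ∃ t : Fin M, D t (Col.o i) = true ∧ D t (Col.v (σ i)) = true) →
      H.edgeSet = ES σ) :
    ∃ x : Data G H, dataToD x = D := by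
  classical
  obtain ⟨h1o, h2o, h1v, h2v, h1b, h2bo, h2bo1, h1c, h2cv, h1s, h2sb, h2sc, h1e, h2se⟩ := hD
  -- rows of the v columns
  choose rv hrv hrv' using fun j => exists_unique_row (h1v j)
  have hrvinj : Function.Injective rv := by
    intro j j' h
    by_contra hne
    exact not_both (h2v j j' hne) (rv j) ⟨hrv j, h ▸ hrv j'⟩
  let ρ : Fin M ≃ Fin M := Equiv.ofBijective rv (Finite.injective_iff_bijective.mp hrvinj)
  -- rows of the o columns
  choose ro hro hro' using fun i => exists_unique_row (h1o i)
  have hroinj : Function.Injective ro := by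
    intro i i' h
    by_contra hne
    exact not_both (h2o i i' hne) (ro i) ⟨hro i, h ▸ hro i'⟩
  let roE : Fin M ≃ Fin M := Equiv.ofBijective ro (Finite.injective_iff_bijective.mp hroinj)
  let σ : Fin M ≃ Fin M := roE.trans ρ.symm
  have hρσ : ∀ x, ρ (σ x) = ro x := fun x => ρ.apply_symm_apply (ro x)
  have hρv : ∀ j, ρ j = rv j := fun j => rfl
  -- rows of the b columns
  have hbrow : ∀ i t, D t (Col.b i) = true ↔ (t = ro i ∨ t = ro (i+1)) := by
    intro i
    have hbo : D (ro i) (Col.b i) = true := by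
      obtain ⟨u, hu1, hu2⟩ := exists_both (h2bo i)
      rwa [hro' i u hu2] at hu1
    have hbo1 : D (ro (i+1)) (Col.b i) = true := by
      obtain ⟨u, hu1, hu2⟩ := exists_both (h2bo1 i)
      rwa [hro' (i+1) u hu2] at hu1
    exact rows_eq_pair (h1b i) hbo hbo1
      (fun h => fin_add_one_ne hM i (hroinj h).symm)
  -- rows of the c columns
  have hcrow : ∀ (P : {P : Sym2 (Fin M) // ¬ P.IsDiag}) (t : Fin M),
      D t (Col.c P) = true ↔ ρ.symm t ∈ P.val := by
    rintro ⟨P, hP⟩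
    induction P using Sym2.ind with | _ j k =>
    rw [Sym2.mk_isDiag_iff] at hP
    have hcj : D (rv j) (Col.c ⟨Sym2.mk j k, hP ∘ Sym2.mk_isDiag_iff.mpr⟩) = true := by
      obtain ⟨u, hu1, hu2⟩ := exists_both (h2cv ⟨Sym2.mk j k, _⟩ j (by simp))
      rwa [hrv' j u hu2] at hu1
    have hck : D (rv k) (Col.c ⟨Sym2.mk j k, hP ∘ Sym2.mk_isDiag_iff.mpr⟩) = true := by
      obtain ⟨u, hu1, hu2⟩ := exists_both (h2cv ⟨Sym2.mk j k, _⟩ k (by simp))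
      rwa [hrv' k u hu2] at hu1
    intro t
    rw [rows_eq_pair (h1c _) hcj hck (fun h => hP (hrvinj h)) t]
    simp only [Sym2.mem_iff]
    constructor
    · rintro (rfl | rfl) <;> simp [← hρv]
    · rintro (h | h)
      · left; rw [← hρv, ← h, ρ.apply_symm_apply]
      · right; rw [← hρv, ← h, ρ.apply_symm_apply]
  -- rows of the s columns
  choose rs hrs hrs' using fun (i : Fin M) (P : NE G) => exists_unique_row (h1s i P)
  have hrsb : ∀ i P, rs i P = ro i ∨ rs i P = ro (i+1) := by
    intro i P
    obtain ⟨u, hu1, hu2⟩ := exists_both (h2sb i P)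
    rw [← hrs' i P u hu1]
    exact (hbrow i u).mp hu2
  let ch : Fin M → NE G → Bool := fun i P => decide (rs i P = ro (i+1))
  have hchrow : ∀ i P, ro (i + (cond (ch i P) 1 0)) = rs i P := by
    intro i P
    by_cases h : rs i P = ro (i+1)
    · have hc : ch i P = true := by simp [ch, h]
      rw [hc]; simpa using h.symm
    · have hc : ch i P = false := by simp [ch, h]
      rcases hrsb i P with h' | h'
      · rw [hc]; simpa using h'.symm
      · exact absurd h' h
  have hgood : ∀ (i : Fin M) (P : NE G), σ (i + (cond (ch i P) 1 0)) ∉ P.val := by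
    intro i P hmem
    refine not_both (h2sc i P) (rs i P) ⟨hrs i P, ?_⟩
    rw [hcrow ⟨P.val, P.prop.1⟩ (rs i P), ← hchrow i P, ← hρσ (i + (cond (ch i P) 1 0)),
      ρ.symm_apply_apply]
    exact hmem
  -- σ traces H
  have hσtr : H.edgeSet = ES ⇑σ := by
    refine hDtr ⇑σ (fun i => ⟨ro i, hro i, ?_⟩)
    rw [← hρσ i, hρv]
    exact hrv (σ i)
  refine ⟨⟨⟨σ, hσtr⟩, ρ, fun i P => ⟨ch i P, hgood i P⟩⟩, ?_⟩
  funext t c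
  cases c with
  | o i =>
    refine decide_eq_bool ?_
    rw [hρσ i]
    exact ⟨fun h => h ▸ hro i, fun h => hro' i t h⟩
  | v j =>
    refine decide_eq_bool ?_
    rw [hρv j]
    exact ⟨fun h => h ▸ hrv j, fun h => hrv' j t h⟩
  | b i =>
    refine decide_eq_bool ?_
    rw [hρσ i, hρσ (i+1)]
    exact (hbrow i t).symm
  | c P =>
    exact decide_eq_bool ((hcrow P t).symm)
  | s i P =>
    refine decide_eq_bool ?_
    rw [hρσ _, hchrow i P]
    exact ⟨fun h => h ▸ hrs i P, fun h => hrs' i P t h⟩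
  | e i P =>
    refine decide_eq_bool ?_
    rw [hρσ _, hchrow i P]
    have he := rows_eq_compl (h1e i P)
      (fun u hu hne => not_both (h2se i P) u ⟨hne ▸ hrs i P, hu⟩)
    exact (he t).symm


lemma ES_mem {σ : Fin M → Fin M} (i : Fin M) : Sym2.mk (σ i) (σ (i+1)) ∈ ES σ := ⟨i, rfl⟩

lemma ES_adj (hM : 3 ≤ M) {σ : Fin M ≃ Fin M} (hσ : H.edgeSet = ES ⇑σ) (j a : Fin M) :
    Sym2.mk (σ j) a ∈ H.edgeSet ↔ a = σ (j+1) ∨ a = σ (j-1) := by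
  rw [hσ]
  constructor
  · rintro ⟨i, hi⟩
    rw [Sym2.eq_iff] at hi
    rcases hi with ⟨h1, h2⟩ | ⟨h1, h2⟩
    · left; rw [h2, σ.injective h1]
    · right; rw [h2]
      have : j = i + 1 := σ.injective h1
      rw [this]; ring_nf
  · rintro (rfl | rfl)
    · exact ⟨j, rfl⟩
    · exact ⟨j - 1, by rw [sub_add_cancel]; exact Sym2.eq_swap⟩

lemma trace_step (hM : 3 ≤ M) {σ τ : Fin M ≃ Fin M} (hσ : H.edgeSet = ES ⇑σ)
    (hτ : H.edgeSet = ES ⇑τ) (k : Fin M) (h0 : τ 0 = σ k) (h1 : τ 1 = σ (k+1)) :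
    ∀ i, τ i = σ (i + k) := by
  have key : ∀ n : ℕ, τ ((n : Fin M)) = σ ((n : Fin M) + k) ∧
      τ ((n : Fin M) + 1) = σ ((n : Fin M) + 1 + k) := by
    intro n
    induction n with
    | zero =>
      refine ⟨by simpa using h0, ?_⟩
      have : ((0:ℕ) : Fin M) + 1 = 1 := by push_cast; ring
      rw [this, h1]; congr 1; push_cast; ring
    | succ n ih =>
      obtain ⟨ih1, ih2⟩ := ih
      have hc : ((n+1 : ℕ) : Fin M) = (n : Fin M) + 1 := by push_cast; ring
      have hadj : Sym2.mk (τ ((n : Fin M) + 1)) (τ ((n : Fin M) + 1 + 1)) ∈ H.edgeSet := by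
        rw [hτ]; exact ES_mem _
      rw [ih2] at hadj
      have hstep : τ ((n : Fin M) + 1 + 1) = σ ((n : Fin M) + 1 + 1 + k) := by
        rcases (ES_adj hM hσ _ _).mp hadj with h | h
        · rw [h]; congr 1; ring
        · exfalso
          have hh : τ ((n : Fin M) + 1 + 1) = τ (n : Fin M) := by
            rw [h, ih1]; congr 1; ring
          have h2 := τ.injective hh
          have : (2 : Fin M) = 0 := by linear_combination h2
          exact fin_two_ne_zero' hM this
      exact ⟨by rw [hc]; exact ih2, by rw [hc]; exact hstep⟩
  intro i
  have := (key i.val).1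
  rwa [Fin.cast_val_eq_self] at this

lemma trace_step_rev (hM : 3 ≤ M) {σ τ : Fin M ≃ Fin M} (hσ : H.edgeSet = ES ⇑σ)
    (hτ : H.edgeSet = ES ⇑τ) (k : Fin M) (h0 : τ 0 = σ k) (h1 : τ 1 = σ (k-1)) :
    ∀ i, τ i = σ (k - i) := by
  have key : ∀ n : ℕ, τ ((n : Fin M)) = σ (k - (n : Fin M)) ∧
      τ ((n : Fin M) + 1) = σ (k - (n : Fin M) - 1) := by
    intro n
    induction n with
    | zero =>
      refine ⟨by simpa using h0, ?_⟩
      have : ((0:ℕ) : Fin M) + 1 = 1 := by push_cast; ring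
      rw [this, h1]; congr 1; push_cast; ring
    | succ n ih =>
      obtain ⟨ih1, ih2⟩ := ih
      have hc : ((n+1 : ℕ) : Fin M) = (n : Fin M) + 1 := by push_cast; ring
      have hadj : Sym2.mk (τ ((n : Fin M) + 1)) (τ ((n : Fin M) + 1 + 1)) ∈ H.edgeSet := by
        rw [hτ]; exact ES_mem _
      rw [ih2] at hadj
      have hadj' : Sym2.mk (σ (k - (n : Fin M) - 1)) (τ ((n : Fin M) + 1 + 1)) ∈ H.edgeSet := hadj
      have hstep : τ ((n : Fin M) + 1 + 1) = σ (k - ((n : Fin M) + 1) - 1) := by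
        rcases (ES_adj hM hσ _ _).mp hadj' with h | h
        · exfalso
          have hh : τ ((n : Fin M) + 1 + 1) = τ (n : Fin M) := by
            rw [h, ih1]; congr 1; ring
          have h2 := τ.injective hh
          have : (2 : Fin M) = 0 := by linear_combination h2
          exact fin_two_ne_zero' hM this
        · rw [h]; congr 1; ring
      refine ⟨by rw [hc, ih2]; congr 1; ring, by rw [hc]; exact hstep⟩
  intro i
  have := (key i.val).1
  rwa [Fin.cast_val_eq_self] at this

lemma card_TS (hM : 3 ≤ M)
    (hH : ∃ σ : Fin M → Fin M, Function.Bijective σ ∧ H.edgeSet = ES σ) :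
    Nat.card (TS H) = 2 * M := by
  classical
  obtain ⟨f, hbij, hE⟩ := hH
  let σ₀ : Fin M ≃ Fin M := Equiv.ofBijective f hbij
  have hσ₀ : H.edgeSet = ES ⇑σ₀ := hE
  have hrot : ∀ k : Fin M, ES (fun i => σ₀ (i + k)) = ES ⇑σ₀ := by
    intro k
    ext P
    constructor
    · rintro ⟨i, hi⟩
      exact ⟨i + k, by rw [hi]; congr 2; ring⟩
    · rintro ⟨i, hi⟩
      exact ⟨i - k, by rw [hi]; congr 2 <;> ring⟩
  have hrev : ∀ k : Fin M, ES (fun i => σ₀ (k - i)) = ES ⇑σ₀ := by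
    intro k
    ext P
    constructor
    · rintro ⟨i, hi⟩
      refine ⟨k - i - 1, ?_⟩
      rw [hi, Sym2.eq_swap]; congr 2 <;> ring
    · rintro ⟨i, hi⟩
      refine ⟨k - i - 1, ?_⟩
      rw [hi, Sym2.eq_swap]; congr 2 <;> ring
  let F : Fin M × Bool → TS H := fun x =>
    if hx : x.2 = true then
      ⟨(Equiv.subLeft x.1).trans σ₀, by rw [hσ₀, ← hrev x.1]; rfl⟩
    else
      ⟨(Equiv.addRight x.1).trans σ₀, by rw [hσ₀, ← hrot x.1]; rfl⟩
  have hFinj : Function.Injective F := by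
    rintro ⟨k, b⟩ ⟨k', b'⟩ h
    have happ : ∀ i, (F (k, b)).1 i = (F (k', b')).1 i := fun i => by rw [h]
    cases b <;> cases b' <;>
      simp only [F, dif_pos, dif_neg, Bool.false_eq_true, not_false_iff,
        Equiv.trans_apply, Equiv.coe_addRight, Equiv.subLeft_apply] at happ
    · have h0 := σ₀.injective (happ 0)
      simp only [zero_add] at h0
      rw [h0]
    · exfalso
      have h0 := σ₀.injective (happ 0)
      simp only [zero_add, sub_zero] at h0
      have h1 := σ₀.injective (happ 1)
      rw [h0] at h1
      have : (2 : Fin M) = 0 := by linear_combination h1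
      exact fin_two_ne_zero' hM this
    · exfalso
      have h0 := σ₀.injective (happ 0)
      simp only [zero_add, sub_zero] at h0
      have h1 := σ₀.injective (happ 1)
      rw [h0] at h1
      have : (2 : Fin M) = 0 := by linear_combination -h1
      exact fin_two_ne_zero' hM this
    · have h0 := σ₀.injective (happ 0)
      simp only [sub_zero] at h0
      rw [h0]
  have hFsurj : Function.Surjective F := by
    rintro ⟨τ, hτ⟩
    set k : Fin M := σ₀.symm (τ 0) with hk
    have h0 : τ 0 = σ₀ k := by rw [hk, Equiv.apply_symm_apply]
    have hadj : Sym2.mk (σ₀ k) (τ 1) ∈ H.edgeSet := by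
      rw [← h0, hτ]
      have : (1 : Fin M) = 0 + 1 := by ring
      rw [this]
      exact ES_mem 0
    rcases (ES_adj hM hσ₀ k (τ 1)).mp hadj with h1 | h1
    · refine ⟨(k, false), ?_⟩
      have := trace_step hM hσ₀ hτ k h0 h1
      apply Subtype.ext
      apply Equiv.ext
      intro i
      simp only [F, Bool.false_eq_true, not_false_iff, dif_neg, Equiv.trans_apply,
        Equiv.coe_addRight]
      exact (this i).symm
    · refine ⟨(k, true), ?_⟩
      have := trace_step_rev hM hσ₀ hτ k h0 h1
      apply Subtype.ext
      apply Equiv.ext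
      intro i
      simp only [F, dif_pos, Equiv.trans_apply, Equiv.subLeft_apply]
      exact (this i).symm
  have := Nat.card_eq_of_bijective F ⟨hFinj, hFsurj⟩
  rw [← this]
  simp [Nat.card_eq_fintype_card, mul_comm]

lemma card_bool_subtype (q : Bool → Prop) [DecidablePred q] :
    Nat.card {b : Bool // q b} = (if q false then 1 else 0) + (if q true then 1 else 0) := by
  rw [Nat.card_eq_fintype_card, Fintype.card_subtype]
  have huniv : (Finset.univ : Finset Bool) = {false, true} := by decide
  rw [huniv, Finset.filter_insert, Finset.filter_singleton]
  by_cases hf : q false <;> by_cases ht : q true <;> simp [hf, ht]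

lemma prod_card_bool (hM : 3 ≤ M) (hHG : H ≤ G) (σ : TS H) (P : NE G) :
    (∏ i : Fin M, Nat.card {b : Bool // σ.1 (i + (cond b 1 0)) ∉ P.val}) = 2 ^ (M - 4) := by
  classical
  obtain ⟨σ, hσ⟩ := σ
  obtain ⟨P, hPd, hPe⟩ := P
  have hedge : ∀ i : Fin M, ¬(σ i ∈ P ∧ σ (i+1) ∈ P) := by
    rintro i ⟨h1, h2⟩
    have hne : σ i ≠ σ (i+1) := fun h => fin_add_one_ne hM i (σ.injective h.symm)
    have hPeq : P = Sym2.mk (σ i) (σ (i+1)) := (Sym2.mem_and_mem_iff hne).mp ⟨h1, h2⟩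
    have : P ∈ H.edgeSet := by rw [hσ]; exact ⟨i, hPeq⟩
    exact hPe ((SimpleGraph.edgeSet_subset_edgeSet.mpr hHG) this)
  -- the four special indices
  induction P using Sym2.ind with | _ j k =>
  rw [Sym2.mk_isDiag_iff] at hPd
  have hcard : ∀ i : Fin M, Nat.card {b : Bool // σ (i + (cond b 1 0)) ∉ Sym2.mk j k} =
      (if σ i ∉ Sym2.mk j k then 1 else 0) + (if σ (i+1) ∉ Sym2.mk j k then 1 else 0) := by
    intro i
    rw [card_bool_subtype]
    congr 2 <;> simp
  simp only [hcard]
  have hA1 : Finset.univ.filter (fun i => σ i ∈ Sym2.mk j k) = {σ.symm j, σ.symm k} := by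
    ext i
    simp [Sym2.mem_iff, Equiv.eq_symm_apply, eq_comm]
  have hA2 : Finset.univ.filter (fun i => σ (i+1) ∈ Sym2.mk j k) =
      {σ.symm j - 1, σ.symm k - 1} := by
    ext i
    simp only [Finset.mem_filter, Finset.mem_univ, true_and, Sym2.mem_iff,
      Finset.mem_insert, Finset.mem_singleton]
    constructor
    · rintro (h | h)
      · left; rw [← σ.eq_symm_apply.mpr h]; ring_nf
      · right; rw [← σ.eq_symm_apply.mpr h]; ring_nf
    · rintro (rfl | rfl)
      · left; rw [sub_add_cancel, Equiv.apply_symm_apply]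
      · right; rw [sub_add_cancel, Equiv.apply_symm_apply]
  have hAcard : (Finset.univ.filter
      (fun i => σ i ∈ Sym2.mk j k ∨ σ (i+1) ∈ Sym2.mk j k)).card = 4 := by
    rw [Finset.filter_or, Finset.card_union_of_disjoint, hA1, hA2]
    · have e1 : σ.symm j ≠ σ.symm k := fun h => hPd (σ.symm.injective h)
      have e2 : σ.symm j - 1 ≠ σ.symm k - 1 := fun h => e1 (by linear_combination h)
      rw [Finset.card_pair e1, Finset.card_pair e2]
    · rw [Finset.disjoint_filter]
      intro i _ h1 h2
      exact hedge i ⟨h1, h2⟩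
  rw [← Finset.prod_filter_mul_prod_filter_not Finset.univ
    (fun i => σ i ∈ Sym2.mk j k ∨ σ (i+1) ∈ Sym2.mk j k)]
  have h1 : ∀ i ∈ Finset.univ.filter (fun i => σ i ∈ Sym2.mk j k ∨ σ (i+1) ∈ Sym2.mk j k),
      ((if σ i ∉ Sym2.mk j k then 1 else 0) + (if σ (i+1) ∉ Sym2.mk j k then 1 else 0)) = 1 := by
    intro i hi
    rw [Finset.mem_filter] at hi
    rcases hi.2 with h | h
    · have h2 : σ (i+1) ∉ Sym2.mk j k := fun h2 => hedge i ⟨h, h2⟩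
      simp [h, h2]
    · have h2 : σ i ∉ Sym2.mk j k := fun h2 => hedge i ⟨h2, h⟩
      simp [h, h2]
  have h2 : ∀ i ∈ Finset.univ.filter
      (fun i => ¬ (σ i ∈ Sym2.mk j k ∨ σ (i+1) ∈ Sym2.mk j k)),
      ((if σ i ∉ Sym2.mk j k then 1 else 0) + (if σ (i+1) ∉ Sym2.mk j k then 1 else 0)) = 2 := by
    intro i hi
    rw [Finset.mem_filter] at hi
    have hni := hi.2
    push_neg at hni
    simp [hni.1, hni.2]
  rw [Finset.prod_congr rfl h1, Finset.prod_congr rfl h2, Finset.prod_const_one,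
    Finset.prod_const, one_mul]
  congr 1
  rw [Finset.filter_not, Finset.card_sdiff_of_subset (Finset.filter_subset _ _), hAcard,
    Finset.card_univ, Fintype.card_fin]

lemma card_NE [DecidableRel G.Adj] : Nat.card (NE G) = M * (M - 1) / 2 - G.edgeFinset.card := by
  classical
  rw [Nat.card_eq_fintype_card]
  have e0 : Fintype.card (NE G) = Fintype.card {P : {P : Sym2 (Fin M) // ¬ P.IsDiag} // P.val ∉ G.edgeSet} := by
    refine Fintype.card_congr ?_
    exact ((Equiv.subtypeSubtypeEquivSubtypeInter (fun P : Sym2 (Fin M) => ¬ P.IsDiag)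
      (fun P => P ∉ G.edgeSet))).symm
  rw [e0, Fintype.card_subtype_compl]
  have e1 : Fintype.card {P : Sym2 (Fin M) // ¬ P.IsDiag} = M * (M - 1) / 2 := by
    rw [Sym2.card_subtype_not_diag, Fintype.card_fin, Nat.choose_two_right]
  have e2 : Fintype.card {P : {P : Sym2 (Fin M) // ¬ P.IsDiag} // P.val ∈ G.edgeSet} =
      G.edgeFinset.card := by
    rw [SimpleGraph.edgeFinset, Set.toFinset_card]
    refine Fintype.card_congr ?_
    refine (Equiv.subtypeSubtypeEquivSubtypeInter _ _).trans (Equiv.subtypeEquivRight ?_)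
    intro P
    constructor
    · rintro ⟨-, h⟩; exact h
    · intro h; exact ⟨G.not_isDiag_of_mem_edgeSet h, h⟩
  rw [e1, e2]

lemma card_choices (hM : 3 ≤ M) (hHG : H ≤ G) [DecidableRel G.Adj] (σ : TS H) :
    Nat.card (∀ (i : Fin M) (P : NE G), {b : Bool // σ.1 (i + (cond b 1 0)) ∉ P.val}) =
      2 ^ ((M - 4) * (M * (M - 1) / 2 - G.edgeFinset.card)) := by
  classical
  rw [Nat.card_pi]
  simp only [Nat.card_pi]
  rw [Finset.prod_comm]
  have : ∀ P : NE G, (∏ i : Fin M, Nat.card {b : Bool // σ.1 (i + (cond b 1 0)) ∉ P.val}) =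
      2 ^ (M - 4) := fun P => prod_card_bool hM hHG σ P
  rw [Finset.prod_congr rfl (fun P _ => this P), Finset.prod_const, Finset.card_univ,
    ← Nat.card_eq_fintype_card, card_NE, ← pow_mul]

lemma nat_card_sigma {ι : Type*} [Fintype ι] (f : ι → Type*) [∀ i, Finite (f i)] :
    Nat.card (Σ i, f i) = ∑ i, Nat.card (f i) := by
  classical
  have : ∀ i, Fintype (f i) := fun i => Fintype.ofFinite _
  simp only [Nat.card_eq_fintype_card]
  exact Fintype.card_sigma

end HC

/-- Fix a Hamiltonian cycle `H` of `G` (a subgraph of `G` whose edge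
set is that of a cyclic ordering of all the vertices). The number of 0–1 datasets
with `M` rows satisfying all the constraints of the Hamiltonian-cycle reduction
whose induced cyclic ordering `σ` (defined by `σ i = ` the unique `j` such that
some row has a 1 in both `o i` and `v j`) traces `H` is exactly
`M! · 2M · 2^((M−4)·L)`, where `L = M(M−1)/2 − N` and `N` is the number of edges
of `G`; in particular this number does not depend on the cycle `H`. -/
theorem count_datasets_per_hamiltonian_cycle (M : ℕ) [NeZero M] (hM : 3 ≤ M)
    (G : SimpleGraph (Fin M)) [DecidableRel G.Adj]
    (H : SimpleGraph (Fin M)) (hHG : H ≤ G)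
    (hH : ∃ σ : Fin M → Fin M, Function.Bijective σ ∧
      H.edgeSet = {P : Sym2 (Fin M) | ∃ i : Fin M, P = Sym2.mk (σ i) (σ (i + 1))}) :
    Nat.card {D : Fin M → Col M G → Bool //
        Satisfies M G D ∧
        ∀ σ : Fin M → Fin M,
          (∀ i : Fin M, ∃ t : Fin M, D t (Col.o i) = true ∧ D t (Col.v (σ i)) = true) →
          H.edgeSet = {P : Sym2 (Fin M) | ∃ i : Fin M, P = Sym2.mk (σ i) (σ (i + 1))}} =
      Nat.factorial M * (2 * M) *
        2 ^ ((M - 4) * (M * (M - 1) / 2 - G.edgeFinset.card)) := by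
  classical
  set L := M * (M - 1) / 2 - G.edgeFinset.card with hL
  let g : Data G H → {D : Fin M → Col M G → Bool //
        Satisfies M G D ∧
        ∀ σ : Fin M → Fin M,
          (∀ i : Fin M, ∃ t : Fin M, D t (Col.o i) = true ∧ D t (Col.v (σ i)) = true) →
          H.edgeSet = {P : Sym2 (Fin M) | ∃ i : Fin M, P = Sym2.mk (σ i) (σ (i + 1))}} :=
    fun x => ⟨dataToD x,
      mkD_satisfies hM x.2.1 x.1.1 _ (fun i P => (x.2.2 i P).2),
      mkD_traces hM x.2.1 x.1.1 _ x.1.2⟩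
  have hginj : Function.Injective g := fun x y h =>
    dataToD_injective hM (congrArg Subtype.val h)
  have hgsurj : Function.Surjective g := by
    rintro ⟨D, hD, hDtr⟩
    obtain ⟨x, hx⟩ := dataToD_surjective hM hHG D hD hDtr
    exact ⟨x, Subtype.ext hx⟩
  rw [← Nat.card_eq_of_bijective g ⟨hginj, hgsurj⟩]
  have hcard : ∀ σ : TS H,
      Nat.card ((Fin M ≃ Fin M) ×
        (∀ (i : Fin M) (P : NE G), {b : Bool // σ.1 (i + (cond b 1 0)) ∉ P.val})) =
      Nat.factorial M * 2 ^ ((M - 4) * L) := by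
    intro σ
    rw [Nat.card_prod, card_choices hM hHG σ, ← hL]
    congr 1
    rw [Nat.card_eq_fintype_card]
    simp [Fintype.card_equiv (Equiv.refl (Fin M))]
  rw [nat_card_sigma]
  rw [Finset.sum_congr rfl (fun σ _ => hcard σ), Finset.sum_const, Finset.card_univ,
    ← Nat.card_eq_fintype_card, card_TS hM hH]
  simp only [smul_eq_mul]
  ring
end

section
/- Let G be a simple graph on vertex set Fin M with M ≥ 3 and L non-edges, and consider the constraint system of the Hamiltonian-cycle reduction. The total number of 0–1 datasets with M rows satisfying all the itemset frequency constraints equals M! · 2M · 2^{(M−4)L} times the number of Hamiltonian cycles of G; in particular, a dataset satisfying the constraints exists if and only if G has a Hamiltonian cycle. -/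
namespace HamCount

set_option linter.unusedSectionVars false

variable {M : ℕ} [NeZero M]

lemma card_ss {p : Fin M → Prop} {a : Fin M} (h : ∀ t, p t ↔ t = a) :
    Nat.card {t // p t} = 1 :=
  Nat.card_eq_one_iff_unique.mpr
    ⟨⟨fun x y => Subtype.ext (by rw [(h x.1).mp x.2, (h y.1).mp y.2])⟩, ⟨a, (h a).mpr rfl⟩⟩

lemma card_pair {p : Fin M → Prop} {a b : Fin M} (hab : a ≠ b)
    (h : ∀ t, p t ↔ t = a ∨ t = b) : Nat.card {t // p t} = 2 := by
  have hs : {t | p t} = ({a, b} : Set (Fin M)) := by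
    ext t; simp [h t, Set.mem_insert_iff]
  have : Nat.card {t // p t} = ({a, b} : Set (Fin M)).ncard := by
    rw [← Nat.card_coe_set_eq, ← hs]; rfl
  rw [this, Set.ncard_pair hab]

lemma card_none {p : Fin M → Prop} (h : ∀ t, ¬ p t) : Nat.card {t : Fin M // p t} = 0 :=
  @Nat.card_of_isEmpty _ ⟨fun x => h x.1 x.2⟩

lemma card_ne (a : Fin M) : Nat.card {t : Fin M // t ≠ a} = M - 1 := by
  rw [Nat.card_eq_fintype_card, Fintype.card_subtype_compl, Fintype.card_fin,
    Fintype.card_subtype_eq]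

lemma one_mem {p : Fin M → Prop} (h : Nat.card {t // p t} = 1) : ∃ a, ∀ t, p t ↔ t = a := by
  obtain ⟨hsub, ⟨x⟩⟩ := Nat.card_eq_one_iff_unique.mp h
  refine ⟨x.1, fun t => ⟨fun ht => ?_, fun ht => ht ▸ x.2⟩⟩
  have : (⟨t, ht⟩ : {t // p t}) = x := Subsingleton.elim _ _
  exact congrArg Subtype.val this

lemma zero_none {p : Fin M → Prop} (h : Nat.card {t // p t} = 0) : ∀ t, ¬ p t := by
  intro t ht
  rcases Nat.card_eq_zero.mp h with h1 | h1
  · exact h1.elim ⟨t, ht⟩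
  · exact (not_finite_iff_infinite.mpr h1) Subtype.finite

lemma two_mem {p : Fin M → Prop} (h : Nat.card {t // p t} = 2) {a b : Fin M}
    (ha : p a) (hb : p b) (hab : a ≠ b) : ∀ t, p t ↔ t = a ∨ t = b := by
  obtain ⟨x, y, hxy, hu⟩ := Nat.card_eq_two_iff.mp h
  have hm : ∀ z : {t // p t}, z = x ∨ z = y := fun z => by
    have : z ∈ ({x, y} : Set {t // p t}) := hu ▸ Set.mem_univ z
    simpa using this
  have hm' : ∀ t (ht : p t), t = x.1 ∨ t = y.1 := fun t ht => by
    rcases hm ⟨t, ht⟩ with h1 | h1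
    exacts [Or.inl (congrArg Subtype.val h1), Or.inr (congrArg Subtype.val h1)]
  have hxyv : x.1 ≠ y.1 := fun hv => hxy (Subtype.ext hv)
  intro t
  constructor
  · intro ht
    rcases hm' t ht with h1 | h1 <;> rcases hm' a ha with h2 | h2 <;>
      rcases hm' b hb with h3 | h3 <;> simp_all
  · rintro (rfl | rfl) <;> assumption



lemma ne_add_one (hM : 2 ≤ M) (i : Fin M) : i ≠ i + 1 := by
  intro h
  have h2 : (0 : Fin M) = 1 := by
    have hh : i + 0 = i + 1 := by rw [add_zero]; exact h
    exact add_left_cancel hh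
  have h3 : (0 : Fin M).val = (1 : Fin M).val := congrArg Fin.val h2
  rw [Fin.val_zero] at h3
  rw [Fin.val_one'] at h3
  rw [Nat.mod_eq_of_lt (by omega : (1 : ℕ) < M)] at h3
  exact one_ne_zero h3.symm

lemma bool_eq_decide {b : Bool} {p : Prop} [Decidable p] (h : b = true ↔ p) : b = decide p := by
  cases b <;> simp_all

variable {G : SimpleGraph (Fin M)}

abbrev ND (M : ℕ) := {P : Sym2 (Fin M) // ¬ P.IsDiag}
abbrev NEdge (M : ℕ) (G : SimpleGraph (Fin M)) := {P : Sym2 (Fin M) // ¬ P.IsDiag ∧ P ∉ G.edgeSet}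

abbrev Rok (ρ π : Equiv.Perm (Fin M)) (i : Fin M) (P : NEdge M G) (t : Fin M) : Prop :=
  (t = ρ i ∨ t = ρ (i + 1)) ∧ ¬ t ∈ Sym2.map π P.1

def mkD (ρ π : Equiv.Perm (Fin M)) (r : ∀ (_ : Fin M) (_ : NEdge M G), Fin M) :
    Fin M → Col M G → Bool := fun t c =>
  match c with
  | .o i => decide (t = ρ i)
  | .v i => decide (t = π i)
  | .b i => decide (t = ρ i ∨ t = ρ (i + 1))
  | .c P => decide (t ∈ Sym2.map π P.1)
  | .s i P => decide (t = r i P)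
  | .e i P => decide (¬ t = r i P)

lemma sat_mkD (hM : 3 ≤ M) (ρ π : Equiv.Perm (Fin M))
    (r : ∀ (_ : Fin M) (_ : NEdge M G), Fin M)
    (hr : ∀ i P, Rok ρ π i P (r i P)) : Satisfies M G (mkD ρ π r) := by
  have hM2 : 2 ≤ M := by omega
  refine ⟨?_, ?_, ?_, ?_, ?_, ?_, ?_, ?_, ?_, ?_, ?_, ?_, ?_, ?_⟩
  · exact fun i => card_ss (a := ρ i) (fun t => by simp [fr1, mkD])
  · intro i j hij
    exact card_none fun t ht => by
      simp only [mkD, decide_eq_true_eq] at ht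
      exact hij (ρ.injective (ht.1.symm.trans ht.2))
  · exact fun i => card_ss (a := π i) (fun t => by simp [fr1, mkD])
  · intro i j hij
    exact card_none fun t ht => by
      simp only [mkD, decide_eq_true_eq] at ht
      exact hij (π.injective (ht.1.symm.trans ht.2))
  · intro i
    exact card_pair (a := ρ i) (b := ρ (i + 1)) (fun h => ne_add_one hM2 i (ρ.injective h))
      (fun t => by simp [mkD])
  · intro i
    exact card_ss (a := ρ i) (fun t => by simp only [mkD, decide_eq_true_eq]; tauto)
  · intro i
    exact card_ss (a := ρ (i + 1)) (fun t => by simp only [mkD, decide_eq_true_eq]; tauto)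
  · rintro ⟨P, hP⟩
    induction P using Sym2.ind with
    | _ x y =>
      have hxy : x ≠ y := by simpa [Sym2.mk_isDiag_iff] using hP
      exact card_pair (a := π x) (b := π y) (fun h => hxy (π.injective h))
        (fun t => by simp [mkD, Sym2.map_pair_eq])
  · rintro ⟨P, hP⟩ j hj
    induction P using Sym2.ind with
    | _ x y =>
      rw [Sym2.mem_iff] at hj
      refine card_ss (a := π j) (fun t => ?_)
      simp only [mkD, Sym2.map_pair_eq, Sym2.mem_iff, decide_eq_true_eq]
      constructor
      · exact fun h => h.2
      · rintro rfl
        rcases hj with rfl | rfl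
        · exact ⟨Or.inl rfl, rfl⟩
        · exact ⟨Or.inr rfl, rfl⟩
  · exact fun i P => card_ss (a := r i P) (fun t => by simp [fr1, mkD])
  · intro i P
    refine card_ss (a := r i P) (fun t => ?_)
    simp only [mkD, decide_eq_true_eq]
    exact ⟨fun h => h.1, fun h => ⟨h, h ▸ (hr i P).1⟩⟩
  · intro i P
    exact card_none fun t ht => by
      simp only [mkD, decide_eq_true_eq] at ht
      exact (hr i P).2 (ht.1 ▸ ht.2)
  · intro i P
    have h0 := card_ne (M := M) (r i P)
    rw [← h0]
    exact Nat.card_congr (Equiv.subtypeEquivRight (fun t => by simp [mkD]))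
  · intro i P
    exact card_none fun t ht => by
      simp only [mkD, decide_eq_true_eq] at ht
      exact ht.2 ht.1

lemma sat_struct (hM : 3 ≤ M) {D : Fin M → Col M G → Bool} (hD : Satisfies M G D) :
    ∃ (ρ π : Equiv.Perm (Fin M)) (r : ∀ (_ : Fin M) (_ : NEdge M G), Fin M),
      (∀ i P, Rok ρ π i P (r i P)) ∧ D = mkD ρ π r := by
  have hM2 : 2 ≤ M := by omega
  obtain ⟨h1, h2, h3, h4, h5, h6, h7, h8, h9, h10, h11, h12, h13, h14⟩ := hD
  choose f hf using fun i => one_mem (h1 i)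
  choose g hg using fun i => one_mem (h3 i)
  have finj : Function.Injective f := by
    intro i j hij
    by_contra hne
    exact zero_none (h2 i j hne) (f i) ⟨(hf i (f i)).mpr rfl, (hf j (f i)).mpr hij⟩
  have ginj : Function.Injective g := by
    intro i j hij
    by_contra hne
    exact zero_none (h4 i j hne) (g i) ⟨(hg i (g i)).mpr rfl, (hg j (g i)).mpr hij⟩
  let ρ : Equiv.Perm (Fin M) := Equiv.ofBijective f (Finite.injective_iff_bijective.mp finj)
  let π : Equiv.Perm (Fin M) := Equiv.ofBijective g (Finite.injective_iff_bijective.mp ginj)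
  -- b columns
  have hbo : ∀ i, D (f i) (Col.b i) = true := by
    intro i
    obtain ⟨a, ha⟩ := one_mem (h6 i)
    have h0 := (ha a).mpr rfl
    have : a = f i := (hf i a).mp h0.2
    exact this ▸ h0.1
  have hbo1 : ∀ i, D (f (i + 1)) (Col.b i) = true := by
    intro i
    obtain ⟨a, ha⟩ := one_mem (h7 i)
    have h0 := (ha a).mpr rfl
    have : a = f (i + 1) := (hf (i + 1) a).mp h0.2
    exact this ▸ h0.1
  have hb : ∀ i t, D t (Col.b i) = true ↔ t = f i ∨ t = f (i + 1) := fun i =>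
    two_mem (h5 i) (hbo i) (hbo1 i) (fun h => ne_add_one hM2 i (finj h))
  -- c columns
  have hc : ∀ (P : ND M) (t : Fin M), D t (Col.c P) = true ↔ t ∈ Sym2.map (⇑π) P.1 := by
    rintro ⟨P, hP⟩
    induction P using Sym2.ind with
    | _ x y =>
      have hxy : x ≠ y := by simpa [Sym2.mk_isDiag_iff] using hP
      have hcx : D (g x) (Col.c ⟨s(x, y), hP⟩) = true := by
        obtain ⟨a, ha⟩ := one_mem (h9 ⟨s(x, y), hP⟩ x (by simp))
        have h0 := (ha a).mpr rfl
        exact (hg x a).mp h0.2 ▸ h0.1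
      have hcy : D (g y) (Col.c ⟨s(x, y), hP⟩) = true := by
        obtain ⟨a, ha⟩ := one_mem (h9 ⟨s(x, y), hP⟩ y (by simp))
        have h0 := (ha a).mpr rfl
        exact (hg y a).mp h0.2 ▸ h0.1
      intro t
      rw [two_mem (h8 ⟨s(x, y), hP⟩) hcx hcy (fun h => hxy (ginj h)) t]
      simp only [Sym2.map_pair_eq, Sym2.mem_iff]
      exact Iff.rfl
  -- s columns
  choose r hr using fun i (P : NEdge M G) => one_mem (h10 i P)
  have hrok : ∀ i P, Rok ρ π i P (r i P) := by
    intro i P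
    constructor
    · obtain ⟨a, ha⟩ := one_mem (h11 i P)
      have h0 := (ha a).mpr rfl
      have ha1 : a = r i P := (hr i P a).mp h0.1
      have := (hb i a).mp h0.2
      rw [ha1] at this
      exact this
    · intro hmem
      have hDs : D (r i P) (Col.s i P) = true := (hr i P _).mpr rfl
      have hDc : D (r i P) (Col.c ⟨P.1, P.2.1⟩) = true := (hc ⟨P.1, P.2.1⟩ _).mpr hmem
      exact zero_none (h12 i P) (r i P) ⟨hDs, hDc⟩
  -- e columns
  have he : ∀ i P t, D t (Col.e i P) = true ↔ ¬ t = r i P := by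
    intro i P
    have hre : ¬ D (r i P) (Col.e i P) = true := fun h =>
      zero_none (h14 i P) (r i P) ⟨(hr i P _).mpr rfl, h⟩
    have hcompl : Nat.card {t : Fin M // ¬ D t (Col.e i P) = true} = 1 := by
      rw [Nat.card_eq_fintype_card, Fintype.card_subtype_compl]
      have h13' := h13 i P
      rw [fr1, Nat.card_eq_fintype_card] at h13'
      rw [Fintype.card_fin, h13']
      omega
    obtain ⟨a, ha⟩ := one_mem hcompl
    have har : a = r i P := ((ha (r i P)).mp hre).symm
    intro t
    constructor
    · intro hDt hteq
      rw [hteq, ← har] at hDt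
      exact ((ha a).mpr rfl) hDt
    · intro hne
      by_contra hDt
      exact hne (((ha t).mp hDt).trans har)
  refine ⟨ρ, π, r, hrok, ?_⟩
  funext t c
  cases c with
  | o i => exact bool_eq_decide (hf i t)
  | v i => exact bool_eq_decide (hg i t)
  | b i => exact bool_eq_decide (hb i t)
  | c P => exact bool_eq_decide (hc P t)
  | s i P => exact bool_eq_decide (hr i P t)
  | e i P => exact bool_eq_decide (he i P t)

open Finset

abbrev HamP (G : SimpleGraph (Fin M)) [DecidableRel G.Adj] (σ : Equiv.Perm (Fin M)) : Prop :=
  ∀ i : Fin M, s(σ i, σ (i + 1)) ∈ G.edgeSet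

abbrev Pack (M : ℕ) [NeZero M] (G : SimpleGraph (Fin M)) [DecidableRel G.Adj] :=
  Σ p : Equiv.Perm (Fin M) × Equiv.Perm (Fin M),
    ∀ (i : Fin M) (P : NEdge M G), {t : Fin M // Rok p.1 p.2 i P t}

variable [DecidableRel G.Adj]

lemma card_sat (hM : 3 ≤ M) :
    Nat.card {D : Fin M → Col M G → Bool // Satisfies M G D} = Nat.card (Pack M G) := by
  refine (Nat.card_congr (Equiv.ofBijective
    (fun x : Pack M G =>
      (⟨mkD x.1.1 x.1.2 (fun i P => (x.2 i P).1),
        sat_mkD hM _ _ _ (fun i P => (x.2 i P).2)⟩ : {D // Satisfies M G D}))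
    ⟨?_, ?_⟩)).symm
  · rintro ⟨⟨ρ, π⟩, r⟩ ⟨⟨ρ', π'⟩, r'⟩ hEq
    have hD : mkD ρ π (fun i P => (r i P).1) = mkD ρ' π' (fun i P => (r' i P).1) :=
      congrArg Subtype.val hEq
    have hρ : ρ = ρ' := by
      ext i
      have h0 := congrFun (congrFun hD (ρ i)) (Col.o i)
      simp only [mkD, decide_eq_true_eq, decide_eq_decide] at h0
      exact congrArg Fin.val (h0.mp trivial)
    have hπ : π = π' := by
      ext i
      have h0 := congrFun (congrFun hD (π i)) (Col.v i)
      simp only [mkD, decide_eq_true_eq, decide_eq_decide] at h0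
      exact congrArg Fin.val (h0.mp trivial)
    subst hρ; subst hπ
    have hr : r = r' := by
      funext i P
      refine Subtype.ext ?_
      have h0 := congrFun (congrFun hD ((r i P).1)) (Col.s i P)
      simp only [mkD, decide_eq_decide] at h0
      exact h0.mp trivial
    rw [hr]
  · rintro ⟨D, hD⟩
    obtain ⟨ρ, π, r, hrok, rfl⟩ := sat_struct hM hD
    exact ⟨⟨(ρ, π), fun i P => ⟨r i P, hrok i P⟩⟩, rfl⟩

lemma card_pack :
    Nat.card (Pack M G) = ∑ p : Equiv.Perm (Fin M) × Equiv.Perm (Fin M),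
      ∏ i : Fin M, ∏ P : NEdge M G, Nat.card {t : Fin M // Rok p.1 p.2 i P t} := by
  rw [Nat.card_eq_fintype_card, Fintype.card_sigma]
  refine Finset.sum_congr rfl (fun p _ => ?_)
  rw [Fintype.card_pi]
  refine Finset.prod_congr rfl (fun i _ => ?_)
  rw [Fintype.card_pi]
  exact Finset.prod_congr rfl (fun P _ => (Nat.card_eq_fintype_card).symm)

lemma prod_i (hM : 3 ≤ M) (ρ : Equiv.Perm (Fin M)) {a b : Fin M} (hab : a ≠ b)
    (hC : ∀ i : Fin M, ¬((ρ i = a ∧ ρ (i + 1) = b) ∨ (ρ i = b ∧ ρ (i + 1) = a))) :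
    (∏ i : Fin M, Nat.card {t : Fin M // (t = ρ i ∨ t = ρ (i + 1)) ∧ ¬(t = a ∨ t = b)}) =
      2 ^ (M - 4) := by
  have hM2 : 2 ≤ M := by omega
  have hfac : ∀ i : Fin M,
      Nat.card {t : Fin M // (t = ρ i ∨ t = ρ (i + 1)) ∧ ¬(t = a ∨ t = b)} =
      if (ρ i = a ∨ ρ i = b ∨ ρ (i + 1) = a ∨ ρ (i + 1) = b) then 1 else 2 := by
    intro i
    have hne : ρ i ≠ ρ (i + 1) := fun h => ne_add_one hM2 i (ρ.injective h)
    by_cases hhit : ρ i = a ∨ ρ i = b ∨ ρ (i + 1) = a ∨ ρ (i + 1) = b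
    · rw [if_pos hhit]
      rcases hhit with h | h | h | h
      · refine card_ss (a := ρ (i + 1)) (fun t => ?_)
        constructor
        · rintro ⟨(rfl | rfl), hnot⟩
          · exact absurd (Or.inl h) hnot
          · rfl
        · rintro rfl
          refine ⟨Or.inr rfl, ?_⟩
          rintro (h1 | h1)
          · exact hne (h.trans h1.symm)
          · exact hC i (Or.inl ⟨h, h1⟩)
      · refine card_ss (a := ρ (i + 1)) (fun t => ?_)
        constructor
        · rintro ⟨(rfl | rfl), hnot⟩
          · exact absurd (Or.inr h) hnot
          · rfl
        · rintro rfl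
          refine ⟨Or.inr rfl, ?_⟩
          rintro (h1 | h1)
          · exact hC i (Or.inr ⟨h, h1⟩)
          · exact hne (h.trans h1.symm)
      · refine card_ss (a := ρ i) (fun t => ?_)
        constructor
        · rintro ⟨(rfl | rfl), hnot⟩
          · rfl
          · exact absurd (Or.inl h) hnot
        · rintro rfl
          refine ⟨Or.inl rfl, ?_⟩
          rintro (h1 | h1)
          · exact hne (h1.trans h.symm)
          · exact hC i (Or.inr ⟨h1, h⟩)
      · refine card_ss (a := ρ i) (fun t => ?_)
        constructor
        · rintro ⟨(rfl | rfl), hnot⟩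
          · rfl
          · exact absurd (Or.inr h) hnot
        · rintro rfl
          refine ⟨Or.inl rfl, ?_⟩
          rintro (h1 | h1)
          · exact hC i (Or.inl ⟨h1, h⟩)
          · exact hne (h1.trans h.symm)
    · rw [if_neg hhit]
      push_neg at hhit
      refine card_pair hne (fun t => ?_)
      exact ⟨fun ht => ht.1, fun ht => ⟨ht, by rcases ht with rfl | rfl <;> tauto⟩⟩
  rw [Finset.prod_congr rfl (fun i _ => hfac i), Finset.prod_ite]
  rw [Finset.prod_const_one, Finset.prod_const, one_mul]
  congr 1
  -- (filter ¬hit).card = M - 4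
  have hA : Finset.univ.filter
      (fun i : Fin M => ρ i = a ∨ ρ i = b ∨ ρ (i + 1) = a ∨ ρ (i + 1) = b) =
      {ρ.symm a, ρ.symm b, ρ.symm a - 1, ρ.symm b - 1} := by
    ext i
    simp only [Finset.mem_filter, Finset.mem_univ, true_and, Finset.mem_insert,
      Finset.mem_singleton]
    rw [Equiv.apply_eq_iff_eq_symm_apply, Equiv.apply_eq_iff_eq_symm_apply,
      Equiv.apply_eq_iff_eq_symm_apply (x := i + 1), Equiv.apply_eq_iff_eq_symm_apply (x := i + 1),
      ← eq_sub_iff_add_eq, ← eq_sub_iff_add_eq]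
  have d2 : ∀ x : Fin M, x ≠ x - 1 := by
    intro x h
    exact ne_add_one hM2 x (eq_sub_iff_add_eq.mp h).symm
  have d3 : ρ.symm a ≠ ρ.symm b - 1 := by
    intro h
    refine hC (ρ.symm a) (Or.inl ⟨Equiv.apply_symm_apply _ _, ?_⟩)
    rw [show ρ.symm a + 1 = ρ.symm b from eq_sub_iff_add_eq.mp h]
    exact Equiv.apply_symm_apply _ _
  have d4 : ρ.symm b ≠ ρ.symm a - 1 := by
    intro h
    refine hC (ρ.symm b) (Or.inr ⟨Equiv.apply_symm_apply _ _, ?_⟩)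
    rw [show ρ.symm b + 1 = ρ.symm a from eq_sub_iff_add_eq.mp h]
    exact Equiv.apply_symm_apply _ _
  have d1 : ρ.symm a ≠ ρ.symm b := fun h => hab (ρ.symm.injective h)
  have d6 : ρ.symm a - 1 ≠ ρ.symm b - 1 := fun h => d1 (sub_left_injective h)
  have hcard4 : (Finset.univ.filter
      (fun i : Fin M => ρ i = a ∨ ρ i = b ∨ ρ (i + 1) = a ∨ ρ (i + 1) = b)).card = 4 := by
    rw [hA]
    rw [Finset.card_insert_of_notMem (by simp [d1, d2 (ρ.symm a), d3]),
      Finset.card_insert_of_notMem (by simp [d4, d2 (ρ.symm b)]),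
      Finset.card_insert_of_notMem (by simp [d6]),
      Finset.card_singleton]
  have hsum := Finset.card_filter_add_card_filter_not (s := (Finset.univ : Finset (Fin M)))
    (fun i : Fin M => ρ i = a ∨ ρ i = b ∨ ρ (i + 1) = a ∨ ρ (i + 1) = b)
  rw [hcard4, Finset.card_univ, Fintype.card_fin] at hsum
  omega


lemma prod_P (hM : 3 ≤ M) (ρ π : Equiv.Perm (Fin M)) :
    (∏ i : Fin M, ∏ P : NEdge M G, Nat.card {t : Fin M // Rok ρ π i P t}) =
    if HamP G (π⁻¹ * ρ) then 2 ^ ((M - 4) * Fintype.card (NEdge M G)) else 0 := by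
  have hM2 : 2 ≤ M := by omega
  rw [Finset.prod_comm]
  have key : ∀ P : NEdge M G, (∏ i : Fin M, Nat.card {t : Fin M // Rok ρ π i P t}) =
      if (∀ i : Fin M, ¬ s((π⁻¹ * ρ) i, (π⁻¹ * ρ) (i + 1)) = P.1)
      then 2 ^ (M - 4) else 0 := by
    rintro ⟨P, hP⟩
    induction P using Sym2.ind with
    | _ x y =>
      have hxy : x ≠ y := by simpa [Sym2.mk_isDiag_iff] using hP.1
      have hab : π x ≠ π y := fun h => hxy (π.injective h)
      have hcond : (∀ i : Fin M,
          ¬((ρ i = π x ∧ ρ (i + 1) = π y) ∨ (ρ i = π y ∧ ρ (i + 1) = π x))) ↔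
          (∀ i : Fin M, ¬ s((π⁻¹ * ρ) i, (π⁻¹ * ρ) (i + 1)) = (⟨s(x, y), hP⟩ : NEdge M G).1) := by
        refine forall_congr' (fun i => not_congr ?_)
        rw [Iff.comm]
        show s(π.symm (ρ i), π.symm (ρ (i + 1))) = s(x, y) ↔ _
        rw [Sym2.eq_iff]
        rw [Equiv.symm_apply_eq, Equiv.symm_apply_eq, Equiv.symm_apply_eq, Equiv.symm_apply_eq]
      by_cases hC : ∀ i : Fin M,
          ¬((ρ i = π x ∧ ρ (i + 1) = π y) ∨ (ρ i = π y ∧ ρ (i + 1) = π x))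
      · rw [if_pos (hcond.mp hC)]
        rw [← prod_i hM ρ hab hC]
        refine Finset.prod_congr rfl (fun i _ => Nat.card_congr (Equiv.subtypeEquivRight ?_))
        intro t
        simp only [Rok, Sym2.map_pair_eq, Sym2.mem_iff]
      · rw [if_neg (fun h => hC (hcond.mpr h))]
        push_neg at hC
        obtain ⟨i0, hi0⟩ := hC
        refine Finset.prod_eq_zero (Finset.mem_univ i0) (card_none (fun t ht => ?_))
        have ht2 := ht.2
        rw [Sym2.map_pair_eq, Sym2.mem_iff] at ht2
        rcases hi0 with ⟨h1, h2⟩ | ⟨h1, h2⟩ <;> rcases ht.1 with rfl | rfl <;> exact ht2 (by tauto)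
  rw [Finset.prod_congr rfl (fun P _ => key P)]
  by_cases hAll : ∀ P : NEdge M G, ∀ i : Fin M, ¬ s((π⁻¹ * ρ) i, (π⁻¹ * ρ) (i + 1)) = P.1
  · have hHam : HamP G (π⁻¹ * ρ) := by
      intro i
      by_contra hmem
      have hnd : ¬ (s((π⁻¹ * ρ) i, (π⁻¹ * ρ) (i + 1))).IsDiag := by
        rw [Sym2.mk_isDiag_iff]
        exact fun h => ne_add_one hM2 i ((π⁻¹ * ρ).injective h)
      exact hAll ⟨_, hnd, hmem⟩ i rfl
    rw [if_pos hHam, Finset.prod_congr rfl (fun P _ => if_pos (hAll P)),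
      Finset.prod_const, Finset.card_univ, ← pow_mul]
  · have hHam : ¬ HamP G (π⁻¹ * ρ) := by
      intro h
      refine hAll (fun P i heq => P.2.2 (heq ▸ h i))
    rw [if_neg hHam]
    push_neg at hAll
    obtain ⟨P0, i0, hi0⟩ := hAll
    refine Finset.prod_eq_zero (Finset.mem_univ P0) ?_
    rw [if_neg]
    push_neg
    exact ⟨i0, hi0⟩

noncomputable instance : Fintype {σ : Equiv.Perm (Fin M) // HamP G σ} :=
  Fintype.ofFinite _

lemma card_sum (hM : 3 ≤ M) :
    Nat.card {D : Fin M → Col M G → Bool // Satisfies M G D} =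
      Nat.factorial M * Nat.card {σ : Equiv.Perm (Fin M) // HamP G σ} *
        2 ^ ((M - 4) * Fintype.card (NEdge M G)) := by
  classical
  rw [card_sat hM, card_pack, Finset.sum_congr rfl (fun p _ => prod_P hM p.1 p.2)]
  have hsplit : ∀ p : Equiv.Perm (Fin M) × Equiv.Perm (Fin M),
      (if HamP G (p.2⁻¹ * p.1) then 2 ^ ((M - 4) * Fintype.card (NEdge M G)) else 0) =
      (if HamP G (p.2⁻¹ * p.1) then 1 else 0) * 2 ^ ((M - 4) * Fintype.card (NEdge M G)) := by
    intro p; split <;> simp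
  rw [Finset.sum_congr rfl (fun p _ => hsplit p), ← Finset.sum_mul, Finset.sum_boole,
    Nat.cast_id]
  congr 1
  rw [← Fintype.card_subtype]
  have e : (Equiv.Perm (Fin M) × {σ : Equiv.Perm (Fin M) // HamP G σ}) ≃
      {p : Equiv.Perm (Fin M) × Equiv.Perm (Fin M) // HamP G (p.2⁻¹ * p.1)} :=
    { toFun := fun x => ⟨(x.1 * x.2.1, x.1), by rw [inv_mul_cancel_left]; exact x.2.2⟩
      invFun := fun p => (p.1.2, ⟨p.1.2⁻¹ * p.1.1, p.2⟩)
      left_inv := by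
        rintro ⟨π, σ, hσ⟩
        simp [inv_mul_cancel_left]
      right_inv := by
        rintro ⟨⟨ρ, π⟩, h⟩
        simp [mul_inv_cancel_left] }
  rw [← Fintype.card_congr e, Fintype.card_prod, Fintype.card_perm, Fintype.card_fin,
    Nat.card_eq_fintype_card]

/-! ### The cycle subgraph part -/

abbrev ES (σ : Fin M → Fin M) : Set (Sym2 (Fin M)) :=
  {P : Sym2 (Fin M) | ∃ i : Fin M, P = Sym2.mk (σ i) (σ (i + 1))}

abbrev Cyc (M : ℕ) [NeZero M] (G : SimpleGraph (Fin M)) :=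
  {H : SimpleGraph (Fin M) // H ≤ G ∧ ∃ σ : Fin M → Fin M, Function.Bijective σ ∧
    H.edgeSet = ES σ}

lemma es_cyc (σ : Equiv.Perm (Fin M)) (hM2 : 2 ≤ M) :
    (SimpleGraph.fromEdgeSet (ES ⇑σ)).edgeSet = ES ⇑σ := by
  rw [SimpleGraph.edgeSet_fromEdgeSet]
  ext P
  constructor
  · exact fun h => h.1
  · intro h
    refine ⟨h, ?_⟩
    obtain ⟨i, rfl⟩ := h
    simp only [Sym2.mem_diagSet, Sym2.mk_isDiag_iff]
    exact fun h => ne_add_one hM2 i (σ.injective h)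

lemma cyc_le {σ : Equiv.Perm (Fin M)} (h : HamP G σ) :
    SimpleGraph.fromEdgeSet (ES ⇑σ) ≤ G := by
  intro v w hadj
  rw [SimpleGraph.fromEdgeSet_adj] at hadj
  obtain ⟨⟨i, heq⟩, hne⟩ := hadj
  rw [← SimpleGraph.mem_edgeSet, heq]
  exact h i

def aff (c : Fin M) (d : Bool) : Equiv.Perm (Fin M) :=
  if d then Equiv.subLeft c else Equiv.addLeft c

lemma aff_false_apply (c x : Fin M) : aff c false x = c + x := rfl

lemma aff_true_apply (c x : Fin M) : aff c true x = c - x := rfl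

lemma aff_zero (c : Fin M) (d : Bool) : aff c d 0 = c := by
  cases d
  · rw [aff_false_apply, add_zero]
  · rw [aff_true_apply, sub_zero]

lemma one_add_one_ne (hM : 3 ≤ M) : (1 : Fin M) + 1 ≠ 0 := by
  intro h
  have hv := congrArg Fin.val h
  rw [Fin.val_add, Fin.val_zero, Fin.val_one'] at hv
  rw [Nat.mod_eq_of_lt (by omega : (1 : ℕ) < M)] at hv
  rw [Nat.mod_eq_of_lt (by omega : (1 + 1 : ℕ) < M)] at hv
  omega

lemma aff_injective (hM : 3 ≤ M) :
    Function.Injective (fun p : Fin M × Bool => aff (M := M) p.1 p.2) := by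
  rintro ⟨c, d⟩ ⟨c', d'⟩ h
  simp only at h
  have hap : ∀ x, aff c d x = aff c' d' x := fun x => by rw [h]
  have hc : c = c' := by
    have h0 := hap 0
    rw [aff_zero, aff_zero] at h0
    exact h0
  subst hc
  suffices hd : d = d' by rw [hd]
  by_contra hne
  have h1 := hap 1
  have habs : (1 : Fin M) + 1 = 0 := by
    cases d <;> cases d'
    · exact absurd rfl hne
    · rw [aff_false_apply, aff_true_apply, sub_eq_add_neg] at h1
      have h2 : (1 : Fin M) = -1 := add_left_cancel h1
      exact eq_neg_iff_add_eq_zero.mp h2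
    · rw [aff_false_apply, aff_true_apply, sub_eq_add_neg] at h1
      have h2 : (-1 : Fin M) = 1 := add_left_cancel h1
      exact eq_neg_iff_add_eq_zero.mp h2.symm
    · exact absurd rfl hne
  exact one_add_one_ne hM habs

lemma mul_aff_false (σ0 : Equiv.Perm (Fin M)) (c x : Fin M) :
    (σ0 * aff c false) x = σ0 (c + x) := rfl

lemma mul_aff_true (σ0 : Equiv.Perm (Fin M)) (c x : Fin M) :
    (σ0 * aff c true) x = σ0 (c - x) := rfl

lemma es_aff (σ0 : Equiv.Perm (Fin M)) (c : Fin M) (d : Bool) :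
    ES ⇑(σ0 * aff c d) = ES ⇑σ0 := by
  ext P
  constructor
  · rintro ⟨i, rfl⟩
    cases d with
    | false =>
      refine ⟨c + i, ?_⟩
      rw [mul_aff_false, mul_aff_false]
      have h1 : c + (i + 1) = (c + i) + 1 := by abel
      rw [h1]
    | true =>
      refine ⟨c - i - 1, ?_⟩
      rw [mul_aff_true, mul_aff_true]
      have h1 : c - (i + 1) = c - i - 1 := by abel
      have h2 : (c - i - 1) + 1 = c - i := by abel
      rw [h1, h2, Sym2.eq_swap]
  · rintro ⟨j, rfl⟩
    cases d with
    | false =>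
      refine ⟨j - c, ?_⟩
      rw [mul_aff_false, mul_aff_false]
      have h1 : c + (j - c) = j := by abel
      have h2 : c + (j - c + 1) = j + 1 := by abel
      rw [h1, h2]
    | true =>
      refine ⟨c - j - 1, ?_⟩
      rw [mul_aff_true, mul_aff_true]
      have h1 : c - (c - j - 1) = j + 1 := by abel
      have h2 : c - (c - j - 1 + 1) = j := by abel
      rw [h1, h2, Sym2.eq_swap]

lemma nbr (σ0 : Equiv.Perm (Fin M)) {x m : Fin M} (h : s(x, σ0 m) ∈ ES ⇑σ0) :
    x = σ0 (m + 1) ∨ x = σ0 (m - 1) := by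
  obtain ⟨i, hi⟩ := h
  rw [Sym2.eq_iff] at hi
  rcases hi with ⟨h1, h2⟩ | ⟨h1, h2⟩
  · right
    have hmi : m = i + 1 := σ0.injective h2
    rw [h1]
    congr 1
    rw [eq_sub_iff_add_eq, ← hmi]
  · left
    have hmi : m = i := σ0.injective h2
    rw [h1, hmi]

open Fin.NatCast Fin.CommRing in
lemma es_eq_aff (hM : 3 ≤ M) (σ0 σ : Equiv.Perm (Fin M)) (hE : ES ⇑σ = ES ⇑σ0) :
    ∃ c d, σ = σ0 * aff c d := by
  have hM2 : 2 ≤ M := by omega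
  set c := σ0.symm (σ 0) with hc
  have hσ0 : σ 0 = σ0 c := (Equiv.apply_symm_apply σ0 (σ 0)).symm
  have h01 : s(σ 1, σ0 c) ∈ ES ⇑σ0 := by
    rw [← hσ0, ← hE]
    exact ⟨0, by rw [zero_add, Sym2.eq_swap]⟩
  obtain ⟨ε, hεpm, hε1⟩ : ∃ ε : Fin M, (ε = 1 ∨ ε = -1) ∧ σ 1 = σ0 (c + ε) := by
    rcases nbr σ0 h01 with h | h
    · exact ⟨1, Or.inl rfl, h⟩
    · exact ⟨-1, Or.inr rfl, by rwa [← sub_eq_add_neg]⟩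
  have key : ∀ k : ℕ, k < M → σ ((k : ℕ) : Fin M) = σ0 (c + ε * ((k : ℕ) : Fin M)) := by
    intro k
    induction k using Nat.strong_induction_on with
    | _ k ih =>
      match k with
      | 0 => intro _; simpa using hσ0
      | 1 => intro _; simpa using hε1
      | (n+2) =>
        intro hk
        have hn : σ ((n : ℕ) : Fin M) = σ0 (c + ε * ((n : ℕ) : Fin M)) :=
          ih n (by omega) (by omega)
        have hn1 : σ (((n+1 : ℕ)) : Fin M) = σ0 (c + ε * (((n+1 : ℕ)) : Fin M)) :=
          ih (n+1) (by omega) (by omega)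
        have hedge : s(σ (((n+2 : ℕ)) : Fin M), σ0 (c + ε * (((n+1 : ℕ)) : Fin M))) ∈ ES ⇑σ0 := by
          rw [← hn1, ← hE]
          refine ⟨((n+1 : ℕ) : Fin M), ?_⟩
          have hcast : ((n+1 : ℕ) : Fin M) + 1 = ((n+2 : ℕ) : Fin M) := by push_cast; ring
          rw [hcast, Sym2.eq_swap]
        have hne2 : σ (((n+2 : ℕ)) : Fin M) ≠ σ ((n : ℕ) : Fin M) := by
          intro h
          have hinj := σ.injective h
          have hv := congrArg Fin.val hinj
          rw [Fin.val_cast_of_lt hk, Fin.val_cast_of_lt (by omega : n < M)] at hv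
          omega
        rcases nbr σ0 hedge with h2 | h2
        · rcases hεpm with rfl | rfl
          · rw [h2]; congr 1; push_cast; ring
          · exfalso
            apply hne2
            rw [h2, hn]
            congr 1
            push_cast; ring
        · rcases hεpm with rfl | rfl
          · exfalso
            apply hne2
            rw [h2, hn]
            congr 1
            push_cast; ring
          · rw [h2]; congr 1; push_cast; ring
  rcases hεpm with rfl | rfl
  · refine ⟨c, false, Equiv.ext fun x => ?_⟩
    have hx := key x.val x.isLt
    rw [Fin.cast_val_eq_self] at hx
    rw [hx, mul_aff_false, one_mul]
  · refine ⟨c, true, Equiv.ext fun x => ?_⟩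
    have hx := key x.val x.isLt
    rw [Fin.cast_val_eq_self] at hx
    rw [hx, mul_aff_true, neg_one_mul, ← sub_eq_add_neg]

lemma hamP_congr {σ τ : Equiv.Perm (Fin M)} (h : ES ⇑σ = ES ⇑τ) (hτ : HamP G τ) :
    HamP G σ := by
  intro i
  have hm : s(σ i, σ (i + 1)) ∈ ES ⇑τ := h ▸ ⟨i, rfl⟩
  obtain ⟨j, hj⟩ := hm
  rw [hj]
  exact hτ j

lemma card_ham (hM : 3 ≤ M) :
    Nat.card {σ : Equiv.Perm (Fin M) // HamP G σ} = Nat.card (Cyc M G) * (M * 2) := by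
  have hM2 : 2 ≤ M := by omega
  let F : {σ : Equiv.Perm (Fin M) // HamP G σ} → Cyc M G := fun σ =>
    ⟨SimpleGraph.fromEdgeSet (ES ⇑σ.1), cyc_le σ.2, ⇑σ.1, σ.1.bijective, (es_cyc σ.1 hM2).symm ▸ rfl⟩
  have hES : ∀ σ τ : {σ : Equiv.Perm (Fin M) // HamP G σ},
      F σ = F τ ↔ ES ⇑σ.1 = ES ⇑τ.1 := by
    intro σ τ
    constructor
    · intro h
      have h2 := congrArg (fun x : Cyc M G => (x.1 : SimpleGraph (Fin M)).edgeSet) h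
      simp only [F] at h2
      rwa [es_cyc _ hM2, es_cyc _ hM2] at h2
    · intro h
      exact Subtype.ext (SimpleGraph.edgeSet_inj.mp
        (by rw [es_cyc _ hM2, es_cyc _ hM2, h]))
  have hFsurj : Function.Surjective F := by
    rintro ⟨H, hle, σf, hbij, hEdge⟩
    refine ⟨⟨Equiv.ofBijective σf hbij, fun i => ?_⟩, Subtype.ext ?_⟩
    · have hm : s(σf i, σf (i + 1)) ∈ H.edgeSet := hEdge ▸ ⟨i, rfl⟩
      exact SimpleGraph.edgeSet_mono hle hm
    · refine SimpleGraph.edgeSet_inj.mp ?_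
      rw [es_cyc _ hM2]
      exact hEdge.symm
  choose rep hrep using hFsurj
  let Θ : Cyc M G × (Fin M × Bool) → {σ : Equiv.Perm (Fin M) // HamP G σ} := fun x =>
    ⟨(rep x.1).1 * aff x.2.1 x.2.2, hamP_congr (es_aff _ _ _) (rep x.1).2⟩
  have hΘbij : Function.Bijective Θ := by
    constructor
    · rintro ⟨h, c, d⟩ ⟨h', c', d'⟩ hEq
      have hh : h = h' := by
        have e1 : F (Θ (h, c, d)) = F (rep h) := (hES _ _).mpr (es_aff _ _ _)
        have e2 : F (Θ (h', c', d')) = F (rep h') := (hES _ _).mpr (es_aff _ _ _)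
        rw [hEq] at e1
        rw [e2] at e1
        rw [hrep, hrep] at e1
        exact e1.symm
      subst hh
      have hv : (rep h).1 * aff c d = (rep h).1 * aff c' d' := congrArg Subtype.val hEq
      have haff : aff (M := M) c d = aff c' d' := mul_left_cancel hv
      have hp := aff_injective hM (show (fun p : Fin M × Bool => aff (M := M) p.1 p.2) (c, d) =
        (fun p : Fin M × Bool => aff (M := M) p.1 p.2) (c', d') from haff)
      rw [Prod.ext_iff] at hp
      simp only at hp
      rw [hp.1, hp.2]
    · intro σ
      have hESeq : ES ⇑σ.1 = ES ⇑(rep (F σ)).1 := (hES _ _).mp (hrep (F σ)).symm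
      obtain ⟨c, d, hcd⟩ := es_eq_aff hM (rep (F σ)).1 σ.1 hESeq
      exact ⟨(F σ, c, d), Subtype.ext hcd.symm⟩
  rw [Nat.card_congr (Equiv.ofBijective Θ hΘbij).symm, Nat.card_prod, Nat.card_prod,
    Nat.card_eq_fintype_card (α := Fin M), Nat.card_eq_fintype_card (α := Bool),
    Fintype.card_fin, Fintype.card_bool]

lemma card_nedge : Fintype.card (NEdge M G) = M * (M - 1) / 2 - G.edgeFinset.card := by
  classical
  have h1 : Fintype.card (ND M) = M * (M - 1) / 2 := by
    rw [Sym2.card_subtype_not_diag, Fintype.card_fin, Nat.choose_two_right]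
  have h2 : Fintype.card {P : Sym2 (Fin M) // ¬ P.IsDiag ∧ P ∈ G.edgeSet} =
      G.edgeFinset.card := by
    rw [SimpleGraph.edgeFinset, Set.toFinset_card]
    exact Fintype.card_congr (Equiv.subtypeEquivRight
      (fun P => ⟨And.right, fun h => ⟨G.not_isDiag_of_mem_edgeSet h, h⟩⟩))
  have h4 := Finset.card_filter_add_card_filter_not
    (s := Finset.univ.filter (fun P : Sym2 (Fin M) => ¬ P.IsDiag))
    (fun P : Sym2 (Fin M) => P ∈ G.edgeSet)
  rw [Finset.filter_filter, Finset.filter_filter] at h4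
  have e1 : Fintype.card {P : Sym2 (Fin M) // ¬ P.IsDiag ∧ P ∈ G.edgeSet} =
      (Finset.univ.filter (fun a : Sym2 (Fin M) => ¬ a.IsDiag ∧ a ∈ G.edgeSet)).card := by
    rw [Fintype.card_subtype]
  have e2 : Fintype.card (NEdge M G) =
      (Finset.univ.filter (fun a : Sym2 (Fin M) => ¬ a.IsDiag ∧ ¬ a ∈ G.edgeSet)).card := by
    rw [Fintype.card_subtype]
  have e3 : Fintype.card (ND M) =
      (Finset.univ.filter (fun a : Sym2 (Fin M) => ¬ a.IsDiag)).card := by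
    rw [Fintype.card_subtype]
  omega

instance : Finite (Col M G) := by
  let f : Col M G → (Fin M ⊕ Fin M ⊕ Fin M ⊕ ND M ⊕ (Fin M × NEdge M G) ⊕ (Fin M × NEdge M G)) :=
    fun c =>
    match c with
    | .o i => Sum.inl i
    | .v i => Sum.inr (Sum.inl i)
    | .b i => Sum.inr (Sum.inr (Sum.inl i))
    | .c P => Sum.inr (Sum.inr (Sum.inr (Sum.inl P)))
    | .s i P => Sum.inr (Sum.inr (Sum.inr (Sum.inr (Sum.inl (i, P)))))
    | .e i P => Sum.inr (Sum.inr (Sum.inr (Sum.inr (Sum.inr (i, P)))))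
  have hinj : Function.Injective f := by
    intro a b h
    cases a <;> cases b <;> simp_all [f]
  exact Finite.of_injective f hinj

instance : Finite (SimpleGraph (Fin M)) := by
  have hinj : Function.Injective (fun H : SimpleGraph (Fin M) => H.Adj) := by
    intro a b h
    exact SimpleGraph.ext h
  exact Finite.of_injective _ hinj

end HamCount

/-- The total number of 0–1 datasets with `M` rows satisfying all
the constraints of the Hamiltonian-cycle reduction for `G` equals
`M! · 2M · 2^((M−4)·L)` times the number of Hamiltonian cycles of `G` (where
`L = M(M−1)/2 − N`, with `N` the number of edges of `G`); in particular a dataset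
satisfying the constraints exists iff `G` has a Hamiltonian cycle. -/
theorem total_count_of_datasets (M : ℕ) [NeZero M] (hM : 3 ≤ M)
    (G : SimpleGraph (Fin M)) [DecidableRel G.Adj] :
    Nat.card {D : Fin M → Col M G → Bool // Satisfies M G D} =
      Nat.factorial M * (2 * M) *
        2 ^ ((M - 4) * (M * (M - 1) / 2 - G.edgeFinset.card)) *
        Nat.card {H : SimpleGraph (Fin M) // H ≤ G ∧
          ∃ σ : Fin M → Fin M, Function.Bijective σ ∧
            H.edgeSet = {P : Sym2 (Fin M) | ∃ i : Fin M, P = Sym2.mk (σ i) (σ (i + 1))}} ∧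
    ((∃ D : Fin M → Col M G → Bool, Satisfies M G D) ↔
      (∃ H : SimpleGraph (Fin M), H ≤ G ∧
        ∃ σ : Fin M → Fin M, Function.Bijective σ ∧
          H.edgeSet = {P : Sym2 (Fin M) | ∃ i : Fin M, P = Sym2.mk (σ i) (σ (i + 1))})) := by
  classical
  have hcount := HamCount.card_sum (G := G) hM
  rw [HamCount.card_ham (G := G) hM, HamCount.card_nedge (G := G)] at hcount
  have hCycEq : Nat.card (HamCount.Cyc M G) =
      Nat.card {H : SimpleGraph (Fin M) // H ≤ G ∧
        ∃ σ : Fin M → Fin M, Function.Bijective σ ∧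
          H.edgeSet = {P : Sym2 (Fin M) | ∃ i : Fin M, P = Sym2.mk (σ i) (σ (i + 1))}} := rfl
  rw [hCycEq] at hcount
  refine ⟨by rw [hcount]; ring, ?_⟩
  constructor
  · rintro ⟨D, hD⟩
    have hne : Nat.card {D : Fin M → Col M G → Bool // Satisfies M G D} ≠ 0 :=
      Nat.card_ne_zero.mpr ⟨⟨⟨D, hD⟩⟩, inferInstance⟩
    rw [hcount] at hne
    rcases mul_ne_zero_iff.mp hne with ⟨hne1, _⟩
    rcases mul_ne_zero_iff.mp hne1 with ⟨_, hne2⟩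
    rcases mul_ne_zero_iff.mp hne2 with ⟨hne3, _⟩
    obtain ⟨⟨H, hH⟩⟩ := (Nat.card_ne_zero.mp hne3).1
    exact ⟨H, hH⟩
  · rintro ⟨H, hH⟩
    have hne : Nat.card {H : SimpleGraph (Fin M) // H ≤ G ∧
        ∃ σ : Fin M → Fin M, Function.Bijective σ ∧
          H.edgeSet = {P : Sym2 (Fin M) | ∃ i : Fin M, P = Sym2.mk (σ i) (σ (i + 1))}} ≠ 0 :=
      Nat.card_ne_zero.mpr ⟨⟨⟨H, hH⟩⟩, Subtype.finite⟩
    have hne' : Nat.card {D : Fin M → Col M G → Bool // Satisfies M G D} ≠ 0 := by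
      rw [hcount]
      have hMM : M * 2 ≠ 0 := Nat.mul_ne_zero (NeZero.ne M) two_ne_zero
      have h22 : (2 : ℕ) ≠ 0 := two_ne_zero
      exact Nat.mul_ne_zero
        (Nat.mul_ne_zero (Nat.factorial_ne_zero M)
          (Nat.mul_ne_zero hne hMM)) (pow_ne_zero _ h22)
    obtain ⟨⟨D, hD⟩⟩ := (Nat.card_ne_zero.mp hne').1
    exact ⟨D, hD⟩
end
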